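/- arXiv:2605.30402 — 6 statements merged into one kernel-verified Lean document; each statement's English description precedes it below -/
import Mathlib

section
/- Let λ ≥ -1/2 be a real number and Δ ≥ 3. Let U be a unicyclic graph with n vertices and maximum degree Δ that has a vertex a of degree Δ lying on its cycle. If U contains another vertex b ≠ a with deg_U(b) ≥ 3, then there exists a unicyclic graph U' with n vertices and maximum degree Δ such that GRM_λ(U') < GRM_λ(U). -/
open SimpleGraph

/-- Degree of a vertex (classical decidability). -/
noncomputable def deg {V : Type*} [Fintype V] (G : SimpleGraph V) (v : V) : ℕ :=
  letI := Classical.decEq V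
  letI : DecidableRel G.Adj := Classical.decRel _
  G.degree v

/-- Maximum degree of a graph (classical decidability). -/
noncomputable def maxDeg {V : Type*} [Fintype V] (G : SimpleGraph V) : ℕ :=
  letI := Classical.decEq V
  letI : DecidableRel G.Adj := Classical.decRel _
  G.maxDegree

/-- The general reduced second Zagreb index
`GRM_λ(G) = Σ_{ab ∈ E(G)} (deg a + λ)(deg b + λ)`. -/
noncomputable def GRM {V : Type*} [Fintype V] (l : ℝ) (G : SimpleGraph V) : ℝ :=
  letI := Classical.decEq V
  letI : DecidableRel G.Adj := Classical.decRel _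
  ∑ e ∈ G.edgeFinset,
    Sym2.lift ⟨fun a b => ((G.degree a : ℝ) + l) * ((G.degree b : ℝ) + l),
      fun a b => by ring⟩ e

/-- A unicyclic graph: connected with exactly as many edges as vertices. -/
def IsUnicyclic {V : Type*} [Fintype V] (G : SimpleGraph V) : Prop :=
  G.Connected ∧ G.edgeSet.ncard = Fintype.card V

/-- A vertex lies on a cycle of `G`. -/
def OnCycle {V : Type*} (G : SimpleGraph V) (v : V) : Prop :=
  ∃ (u : V) (w : G.Walk u u), w.IsCycle ∧ v ∈ w.support

set_option linter.unusedSectionVars false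
set_option maxHeartbeats 1600000

namespace ZagAux

variable {V : Type*} [Fintype V]


/-- The weight function on edges. -/
noncomputable def wf {V : Type*} [Fintype V] (l : ℝ) (G : SimpleGraph V) : Sym2 V → ℝ :=
  Sym2.lift ⟨fun x y => ((deg G x : ℝ) + l) * ((deg G y : ℝ) + l), fun x y => by ring⟩

@[simp] lemma wf_mk {l : ℝ} {G : SimpleGraph V} (x y : V) :
    wf l G s(x, y) = ((deg G x : ℝ) + l) * ((deg G y : ℝ) + l) := rfl

/-- Instance-free edge finset. -/
noncomputable def EF {V : Type*} [Fintype V] (G : SimpleGraph V) : Finset (Sym2 V) :=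
  G.edgeSet.toFinite.toFinset

lemma mem_EF {G : SimpleGraph V} {e : Sym2 V} : e ∈ EF G ↔ e ∈ G.edgeSet :=
  Set.Finite.mem_toFinset _

lemma deg_eq_ncard (G : SimpleGraph V) (v : V) : deg G v = (G.neighborSet v).ncard := by
  letI := Classical.decEq V
  letI : DecidableRel G.Adj := Classical.decRel _
  show G.degree v = _
  rw [SimpleGraph.degree, SimpleGraph.neighborFinset, Set.ncard_eq_toFinset_card']

lemma GRM_eq (l : ℝ) (G : SimpleGraph V) : GRM l G = ∑ e ∈ EF G, wf l G e := by
  letI := Classical.decEq V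
  letI : DecidableRel G.Adj := Classical.decRel _
  show ∑ e ∈ G.edgeFinset, _ = _
  apply Finset.sum_congr
  · ext e
    simp [mem_EF, SimpleGraph.mem_edgeFinset]
  · intro e _
    induction e with
    | _ x y =>
      simp only [Sym2.lift_mk, wf_mk]
      rw [deg_eq_ncard, deg_eq_ncard, SimpleGraph.degree, SimpleGraph.neighborFinset,
        Set.ncard_eq_toFinset_card', SimpleGraph.degree, SimpleGraph.neighborFinset,
        Set.ncard_eq_toFinset_card']

lemma le_maxDeg (G : SimpleGraph V) (v : V) : deg G v ≤ maxDeg G := by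
  letI := Classical.decEq V
  letI : DecidableRel G.Adj := Classical.decRel _
  exact G.degree_le_maxDegree v

lemma maxDeg_eq_of {G : SimpleGraph V} {Δ : ℕ} (a : V) (h1 : deg G a = Δ)
    (h2 : ∀ v, deg G v ≤ Δ) : maxDeg G = Δ := by
  letI := Classical.decEq V
  letI : DecidableRel G.Adj := Classical.decRel _
  refine le_antisymm (G.maxDegree_le_of_forall_degree_le _ ?_) (h1 ▸ le_maxDeg G a)
  intro v
  exact h2 v

lemma sum_deg (G : SimpleGraph V) : ∑ v, deg G v = 2 * G.edgeSet.ncard := by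
  letI := Classical.decEq V
  letI : DecidableRel G.Adj := Classical.decRel _
  have : ∑ v, deg G v = ∑ v, G.degree v := rfl
  rw [this, SimpleGraph.sum_degrees_eq_twice_card_edges, SimpleGraph.edgeFinset,
    Set.ncard_eq_toFinset_card']

lemma one_le_deg {G : SimpleGraph V} {v x : V} (h : G.Adj v x) : 1 ≤ deg G v := by
  rw [deg_eq_ncard]
  exact (Set.ncard_pos (Set.toFinite _)).mpr ⟨x, h⟩

lemma two_le_deg {G : SimpleGraph V} {v x y : V} (hx : G.Adj v x) (hy : G.Adj v y)
    (hxy : x ≠ y) : 2 ≤ deg G v := by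
  rw [deg_eq_ncard]
  exact Set.one_lt_ncard_iff (Set.toFinite _) |>.mpr ⟨x, y, hx, hy, hxy⟩

lemma three_le_deg {G : SimpleGraph V} {v x y z : V} (hx : G.Adj v x) (hy : G.Adj v y)
    (hz : G.Adj v z) (hxy : x ≠ y) (hxz : x ≠ z) (hyz : y ≠ z) : 3 ≤ deg G v := by
  rw [deg_eq_ncard]
  have hsub : {x, y, z} ⊆ G.neighborSet v := by
    intro w hw
    rcases hw with rfl | rfl | rfl <;> assumption
  calc (3 : ℕ) = ({x, y, z} : Set V).ncard := by
        rw [Set.ncard_insert_of_notMem (by simp [hxy, hxz]) (Set.toFinite _),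
          Set.ncard_insert_of_notMem (by simp [hyz]) (Set.toFinite _), Set.ncard_singleton]
    _ ≤ _ := Set.ncard_le_ncard hsub (Set.toFinite _)

lemma leaf_nbhd {G : SimpleGraph V} {z p : V} (h1 : deg G z = 1) (h2 : G.Adj z p) :
    G.neighborSet z = {p} := by
  rw [deg_eq_ncard] at h1
  obtain ⟨x, hx⟩ := Set.ncard_eq_one.mp h1
  have : p ∈ G.neighborSet z := h2
  rw [hx] at this ⊢
  simp_all

omit [Fintype V] in
lemma exists_nbr {G : SimpleGraph V} (hconn : G.Connected) {v u : V} (hvu : v ≠ u) :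
    ∃ x, G.Adj v x := by
  obtain ⟨W⟩ := hconn v u
  cases W with
  | nil => exact absurd rfl hvu
  | cons h _ => exact ⟨_, h⟩

lemma deg_pos {G : SimpleGraph V} (hconn : G.Connected) {v u : V} (hvu : v ≠ u) :
    1 ≤ deg G v := by
  obtain ⟨x, hx⟩ := exists_nbr hconn hvu
  exact one_le_deg hx

lemma cycle_struct {G : SimpleGraph V} {a : V} (hacyc : OnCycle G a) (ha3 : 3 ≤ deg G a) :
    ∃ r s : V, G.Adj a r ∧ G.Adj r s ∧ s ≠ a ∧ 2 ≤ deg G r ∧ 2 ≤ deg G s ∧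
      (∃ Wrs : G.Walk r s, s(r,s) ∉ Wrs.edges) ∧
      (∀ z, deg G z = 1 → (∀ w, G.Adj z w → deg G w ≤ 2) → ¬G.Adj z r ∧ ¬G.Adj z s) ∧
      (∃ r' : V, G.Adj a r' ∧ r' ≠ r ∧ 2 ≤ deg G r') := by
  classical
  obtain ⟨u, w0, hcyc0, hmem⟩ := hacyc
  have hW : (w0.rotate a hmem).IsCycle := hcyc0.rotate hmem
  have hlen : 3 ≤ (w0.rotate a hmem).length := hW.three_le_length
  revert hW hlen
  generalize w0.rotate a hmem = W
  clear hmem hcyc0 w0 u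
  intro hW hlen
  cases W with
  | nil => simp at hlen
  | @cons _ r _ h₁ W₁ =>
    cases W₁ with
    | nil => simp at hlen
    | @cons _ s _ h₂ W₂ =>
      cases W₂ with
      | nil => simp at hlen
      | @cons _ t _ h₃ W₃ =>
        -- W = a → r → s → t → ⋯ → a
        have hnd0 : (Walk.cons h₁ (Walk.cons h₂ (Walk.cons h₃ W₃))).edges.Nodup :=
          hW.isCircuit.isTrail.edges_nodup
        have hnd := hnd0
        rw [Walk.edges_cons, Walk.edges_cons, List.nodup_cons, List.nodup_cons] at hnd
        obtain ⟨hndar, hndrs, -⟩ := hnd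
        have hsupp : (Walk.cons h₁ (Walk.cons h₂ (Walk.cons h₃ W₃))).support.tail.Nodup :=
          hW.support_nodup
        rw [Walk.support_cons, List.tail_cons, Walk.support_cons, Walk.support_cons,
          List.nodup_cons, List.nodup_cons] at hsupp
        have har : a ≠ r := h₁.ne
        have hsa : s ≠ a := by
          intro h
          exact hsupp.2.1 (h ▸ W₃.end_mem_support)
        have htr : t ≠ r := by
          intro h
          subst h
          apply hndrs
          rw [Walk.edges_cons]
          exact List.mem_cons.mpr (Or.inl Sym2.eq_swap)
        have hdegr : 2 ≤ deg G r := two_le_deg h₁.symm h₂ (fun h => hsa h.symm)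
        have hdegs : 2 ≤ deg G s := two_le_deg h₂.symm h₃ (fun h => htr h.symm)
        have haz : ∀ z, deg G z = 1 → a ≠ z := by
          intro z hz1 h
          rw [h, hz1] at ha3
          omega
        have ht : t = a ∨ 2 ≤ deg G t := by
          cases W₃ with
          | nil => exact Or.inl rfl
          | @cons _ t₂ _ h₄ W₄ =>
            refine Or.inr (two_le_deg h₃.symm h₄ ?_)
            intro h
            have hnd' := hnd0
            rw [Walk.edges_cons, Walk.edges_cons, Walk.edges_cons, List.nodup_cons,
              List.nodup_cons, List.nodup_cons] at hnd'
            subst h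
            apply hnd'.2.2.1
            rw [Walk.edges_cons]
            exact List.mem_cons.mpr (Or.inl Sym2.eq_swap)
        refine ⟨r, s, h₁, h₂, hsa, hdegr, hdegs, ?_, ?_, ?_⟩
        · -- walk from r to s avoiding the edge rs
          refine ⟨Walk.cons h₁.symm (Walk.cons h₃ W₃).reverse, ?_⟩
          rw [Walk.edges_cons, List.mem_cons, Walk.edges_reverse, List.mem_reverse]
          rintro (h | h)
          · rcases Sym2.eq_iff.mp h with ⟨-, h'⟩ | ⟨h', -⟩
            · exact hsa h'
            · exact har h'.symm
          · exact hndrs h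
        · -- leaves with small neighbors are not adjacent to r or s
          intro z hz1 hz2
          have hzr : z ≠ r := by
            intro h
            rw [← h] at hdegr
            omega
          have hzs : z ≠ s := by
            intro h
            rw [← h] at hdegs
            omega
          constructor
          · intro hzr'
            have h3 : 3 ≤ deg G r :=
              three_le_deg h₁.symm h₂ hzr'.symm (fun h => hsa h.symm) (haz z hz1)
                (fun h => hzs h.symm)
            have := hz2 r hzr'
            omega
          · intro hzs'
            have htz : t ≠ z := by
              rcases ht with h | h
              · exact h ▸ (haz z hz1)
              · intro h'
                rw [h', hz1] at h
                omega
            have h3 : 3 ≤ deg G s :=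
              three_le_deg h₂.symm h₃ hzs'.symm (fun h => htr h.symm)
                (fun h => hzr h.symm) htz
            have := hz2 s hzs'
            omega
        · -- second neighbor of a on the cycle
          obtain ⟨x, Q, h', hWeq⟩ := Walk.exists_cons_eq_concat h₁
            (Walk.cons h₂ (Walk.cons h₃ W₃))
          have hE : s(a,r) :: (Walk.cons h₂ (Walk.cons h₃ W₃)).edges
              = Q.edges ++ [s(x,a)] := by
            rw [← Walk.edges_cons (h := h₁), hWeq, Walk.edges_concat, List.concat_eq_append]
          have hndQ : (Q.edges ++ [s(x,a)]).Nodup := by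
            rw [← List.concat_eq_append, ← Walk.edges_concat (h := h'), ← hWeq]
            exact hnd0
          have hdisj := List.disjoint_of_nodup_append hndQ
          have hxamem : s(x,a) ∈ (Walk.cons h₂ (Walk.cons h₃ W₃)).edges ∧ s(a,r) ∈ Q.edges := by
            cases hQE : Q.edges with
            | nil =>
              rw [hQE] at hE
              simp at hE
            | cons e es =>
              rw [hQE] at hE
              rw [List.cons_append, List.cons.injEq] at hE
              constructor
              · rw [hE.2]
                exact List.mem_append_right _ (List.mem_singleton_self _)
              · rw [← hE.1]
                exact List.mem_cons_self
          have hxr : x ≠ r := by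
            intro h
            subst h
            apply hndar
            have h2 : s(a,x) = s(x,a) := Sym2.eq_swap
            rw [h2]
            exact hxamem.1
          have hax : a ≠ x := (h'.ne).symm
          obtain ⟨w', hadj, Q', hQeq⟩ := Walk.exists_eq_cons_of_ne hax Q
          obtain ⟨y, Q₂, h'', hQeq2⟩ := Walk.exists_cons_eq_concat hadj Q'
          have hQedges : Q.edges = Q₂.edges ++ [s(y,x)] := by
            rw [hQeq, hQeq2, Walk.edges_concat, List.concat_eq_append]
          have hya : y ≠ a := by
            intro h
            have hm : s(y,x) ∈ Q.edges := by
              rw [hQedges]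
              exact List.mem_append_right _ (List.mem_singleton_self _)
            have he : s(y,x) = s(x,a) := by
              rw [h]
              exact Sym2.eq_swap
            exact hdisj (he ▸ hm) (List.mem_singleton_self _)
          have hdegx : 2 ≤ deg G x := two_le_deg h' h''.symm (fun h => hya h.symm)
          exact ⟨x, h'.symm, hxr, hdegx⟩

section Swap

variable (U : SimpleGraph V) (p q z : V)

/-- The surgery: delete edge `pq`, add edge `zq`. -/
noncomputable def swap : SimpleGraph V :=
  SimpleGraph.fromEdgeSet ((U.edgeSet \ {s(p,q)}) ∪ {s(z,q)})

variable {U p q z}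

lemma swap_adj (hzq' : z ≠ q) {x y : V} : (swap U p q z).Adj x y ↔
    ((U.Adj x y ∧ s(x,y) ≠ s(p,q)) ∨ s(x,y) = s(z,q)) := by
  simp only [swap, fromEdgeSet_adj, Set.mem_union, Set.mem_diff, Set.mem_singleton_iff,
    mem_edgeSet]
  constructor
  · rintro ⟨⟨h1, h2⟩ | h1, _⟩
    · exact Or.inl ⟨h1, h2⟩
    · exact Or.inr h1
  · rintro (⟨h1, h2⟩ | h1)
    · exact ⟨Or.inl ⟨h1, h2⟩, h1.ne⟩
    · refine ⟨Or.inr h1, ?_⟩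
      rintro rfl
      rw [Sym2.eq_iff] at h1
      rcases h1 with ⟨rfl, rfl⟩ | ⟨rfl, rfl⟩ <;> exact hzq' rfl

variable (hpq : U.Adj p q) (hzq : ¬ U.Adj z q) (hzp : z ≠ p) (hzq' : z ≠ q)
include hpq hzq hzp hzq'

lemma swap_nbhd_p : (swap U p q z).neighborSet p = U.neighborSet p \ {q} := by
  ext y
  simp only [mem_neighborSet, Set.mem_diff, Set.mem_singleton_iff]
  rw [swap_adj hzq']
  constructor
  · rintro (⟨h1, h2⟩ | h1)
    · exact ⟨h1, fun hyq => h2 (by rw [hyq])⟩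
    · rcases Sym2.eq_iff.mp h1 with ⟨h3, -⟩ | ⟨h3, -⟩
      · exact absurd h3.symm hzp
      · exact absurd h3 hpq.ne
  · rintro ⟨h1, h2⟩
    refine Or.inl ⟨h1, fun he => ?_⟩
    rcases Sym2.eq_iff.mp he with ⟨-, h3⟩ | ⟨h3, -⟩
    · exact h2 h3
    · exact hpq.ne h3

lemma swap_nbhd_z : (swap U p q z).neighborSet z = insert q (U.neighborSet z) := by
  ext y
  simp only [mem_neighborSet, Set.mem_insert_iff]
  rw [swap_adj hzq']
  constructor
  · rintro (⟨h1, -⟩ | h1)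
    · exact Or.inr h1
    · rcases Sym2.eq_iff.mp h1 with ⟨-, h3⟩ | ⟨h3, -⟩
      · exact Or.inl h3
      · exact absurd h3 hzq'
  · rintro (rfl | h1)
    · exact Or.inr (Sym2.eq_iff.mpr (Or.inl ⟨rfl, rfl⟩))
    · refine Or.inl ⟨h1, fun he => ?_⟩
      rcases Sym2.eq_iff.mp he with ⟨h3, -⟩ | ⟨h3, -⟩
      · exact hzp h3
      · exact hzq' h3

lemma swap_nbhd_q : (swap U p q z).neighborSet q = insert z (U.neighborSet q \ {p}) := by
  ext y
  simp only [mem_neighborSet, Set.mem_insert_iff, Set.mem_diff, Set.mem_singleton_iff]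
  rw [swap_adj hzq']
  constructor
  · rintro (⟨h1, h2⟩ | h1)
    · refine Or.inr ⟨h1, fun hyp => ?_⟩
      exact h2 (Sym2.eq_iff.mpr (Or.inr ⟨rfl, hyp⟩))
    · rcases Sym2.eq_iff.mp h1 with ⟨h3, -⟩ | ⟨-, h3⟩
      · exact absurd h3.symm hzq'
      · exact Or.inl h3
  · rintro (rfl | ⟨h1, h2⟩)
    · exact Or.inr (Sym2.eq_iff.mpr (Or.inr ⟨rfl, rfl⟩))
    · refine Or.inl ⟨h1, fun he => ?_⟩
      rcases Sym2.eq_iff.mp he with ⟨h3, -⟩ | ⟨-, h3⟩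
      · exact hpq.ne h3.symm
      · exact h2 h3

lemma swap_nbhd_other {x : V} (hxp : x ≠ p) (hxz : x ≠ z) (hxq : x ≠ q) :
    (swap U p q z).neighborSet x = U.neighborSet x := by
  ext y
  simp only [mem_neighborSet]
  rw [swap_adj hzq']
  constructor
  · rintro (⟨h1, -⟩ | h1)
    · exact h1
    · rcases Sym2.eq_iff.mp h1 with ⟨h3, -⟩ | ⟨h3, -⟩
      · exact absurd h3 hxz
      · exact absurd h3 hxq
  · intro h1
    refine Or.inl ⟨h1, fun he => ?_⟩
    rcases Sym2.eq_iff.mp he with ⟨h3, -⟩ | ⟨h3, -⟩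
    · exact hxp h3
    · exact hxq h3

lemma swap_deg_p : deg (swap U p q z) p = deg U p - 1 := by
  rw [deg_eq_ncard, deg_eq_ncard, swap_nbhd_p hpq hzq hzp hzq',
    Set.ncard_diff_singleton_of_mem (show q ∈ U.neighborSet p from hpq)]

lemma swap_deg_z : deg (swap U p q z) z = deg U z + 1 := by
  rw [deg_eq_ncard, deg_eq_ncard, swap_nbhd_z hpq hzq hzp hzq',
    Set.ncard_insert_of_notMem (show q ∉ U.neighborSet z from hzq) (Set.toFinite _)]

lemma swap_deg_other {x : V} (hxp : x ≠ p) (hxz : x ≠ z) :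
    deg (swap U p q z) x = deg U x := by
  by_cases hxq : x = q
  · subst hxq
    rw [deg_eq_ncard, deg_eq_ncard, swap_nbhd_q hpq hzq hzp hzq']
    have hz : z ∉ U.neighborSet x \ {p} := fun hz => hzq hz.1.symm
    have hp : p ∈ U.neighborSet x := hpq.symm
    rw [Set.ncard_insert_of_notMem hz (Set.toFinite _),
      Set.ncard_diff_singleton_of_mem hp]
    have : 1 ≤ (U.neighborSet x).ncard := (Set.ncard_pos (Set.toFinite _)).mpr ⟨p, hp⟩
    omega
  · rw [deg_eq_ncard, deg_eq_ncard, swap_nbhd_other hpq hzq hzp hzq' hxp hxz hxq]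

lemma swap_edgeSet : (swap U p q z).edgeSet = (U.edgeSet \ {s(p,q)}) ∪ {s(z,q)} := by
  rw [swap, edgeSet_fromEdgeSet]
  ext e
  simp only [Set.mem_diff, Set.mem_union, Set.mem_singleton_iff, Set.mem_setOf_eq]
  constructor
  · rintro ⟨h, -⟩
    exact h
  · rintro (⟨h1, h2⟩ | rfl)
    · exact ⟨Or.inl ⟨h1, h2⟩, SimpleGraph.not_isDiag_of_mem_edgeSet U h1⟩
    · refine ⟨Or.inr rfl, ?_⟩
      simpa using hzq'

lemma swap_ncard : (swap U p q z).edgeSet.ncard = U.edgeSet.ncard := by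
  rw [swap_edgeSet hpq hzq hzp hzq']
  have h1 : s(p,q) ∈ U.edgeSet := hpq
  have h2 : s(z,q) ∉ U.edgeSet \ {s(p,q)} := fun h => hzq h.1
  rw [Set.ncard_union_eq (by simpa using h2) ((U.edgeSet.toFinite).diff)
      (Set.finite_singleton _),
    Set.ncard_diff_singleton_of_mem h1, Set.ncard_singleton]
  have : 1 ≤ U.edgeSet.ncard := (Set.ncard_pos U.edgeSet.toFinite).mpr ⟨_, h1⟩
  omega

omit hpq hzq hzp in
lemma swap_connected (hconn : U.Connected) (hr : (swap U p q z).Reachable p q) :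
    (swap U p q z).Connected := by
  rw [connected_iff]
  refine ⟨?_, hconn.nonempty⟩
  intro u v
  obtain ⟨W⟩ := hconn u v
  induction W with
  | nil => exact Reachable.refl _
  | @cons x y w h W ih =>
    refine Reachable.trans ?_ ih
    by_cases he : s(x,y) = s(p,q)
    · rcases Sym2.eq_iff.mp he with ⟨rfl, rfl⟩ | ⟨rfl, rfl⟩
      · exact hr
      · exact hr.symm
    · exact ((swap_adj hzq').mpr (Or.inl ⟨h, he⟩)).reachable

end Swap

section Diff
variable [DecidableEq V] {U : SimpleGraph V} {p q z : V} (l : ℝ)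
lemma sum_A_eq {f : Sym2 V → ℝ} :
    ∑ e ∈ ((U.neighborSet p).toFinite.toFinset.erase q).image (fun u => s(p,u)), f e
      = ∑ u ∈ (U.neighborSet p).toFinite.toFinset.erase q, f s(p,u) := by
  apply Finset.sum_image
  intro u hu u' hu' he
  rw [Finset.mem_coe, Finset.mem_erase, Set.Finite.mem_toFinset] at hu hu'
  rcases Sym2.eq_iff.mp he with ⟨-, h⟩ | ⟨h, -⟩
  · exact h
  · exact absurd h.symm (SimpleGraph.Adj.ne hu'.2).symm

lemma A_subset (hpq : U.Adj p q) :
    ((U.neighborSet p).toFinite.toFinset.erase q).image (fun u => s(p,u))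
    ⊆ (EF U).erase s(p,q) := by
  intro e he
  rw [Finset.mem_image] at he
  obtain ⟨u, hu, rfl⟩ := he
  rw [Finset.mem_erase, Set.Finite.mem_toFinset] at hu
  rw [Finset.mem_erase, mem_EF, mem_edgeSet]
  refine ⟨fun he' => ?_, hu.2⟩
  rcases Sym2.eq_iff.mp he' with ⟨-, h⟩ | ⟨h, -⟩
  · exact hu.1 h
  · exact hpq.ne h

variable (hpq : U.Adj p q) (hzq : ¬ U.Adj z q) (hzp : z ≠ p) (hzq' : z ≠ q)
include hpq hzq hzp hzq'

lemma grm_key :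
    GRM l (swap U p q z) - GRM l U =
      (∑ e ∈ (EF U).erase s(p,q), (wf l (swap U p q z) e - wf l U e))
        + wf l (swap U p q z) s(z,q) - wf l U s(p,q) := by
  have hEF' : EF (swap U p q z) = insert s(z,q) ((EF U).erase s(p,q)) := by
    ext e
    simp only [mem_EF, swap_edgeSet hpq hzq hzp hzq', Set.mem_union, Set.mem_diff,
      Set.mem_singleton_iff, Finset.mem_insert, Finset.mem_erase]
    tauto
  have h1 : s(p,q) ∈ EF U := mem_EF.mpr hpq
  have h2 : s(z,q) ∉ (EF U).erase s(p,q) := by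
    simp only [Finset.mem_erase, mem_EF, mem_edgeSet]
    tauto
  have h3 : ∑ e ∈ EF U, wf l U e
      = wf l U s(p,q) + ∑ e ∈ (EF U).erase s(p,q), wf l U e := by
    rw [← Finset.sum_insert (Finset.notMem_erase _ _), Finset.insert_erase h1]
  rw [GRM_eq, GRM_eq, hEF', Finset.sum_insert h2, h3, Finset.sum_sub_distrib]
  ring


lemma grm_diff_caseI (hpz : U.Adj p z) (hleaf : U.neighborSet z = {p}) :
    GRM l (swap U p q z) - GRM l U
      = ((deg U p : ℝ) - 2) * (1 - ((deg U q : ℝ) + l))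
        - ∑ u ∈ ((U.neighborSet p).toFinite.toFinset.erase q).erase z,
            ((deg U u : ℝ) + l) := by
  have hdz : deg U z = 1 := by rw [deg_eq_ncard, hleaf, Set.ncard_singleton]
  have hdp1 : 1 ≤ deg U p := one_le_deg hpq
  have hqp : q ≠ p := hpq.ne'
  have hqz : q ≠ z := fun h => hzq' h.symm
  have claim : ∀ x y : V, U.Adj x y → s(x,y) ≠ s(p,q) →
      s(x,y) ∉ ((U.neighborSet p).toFinite.toFinset.erase q).image (fun u => s(p,u)) →
      x ≠ p ∧ x ≠ z := by
    intro x y hadj hne hnA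
    constructor
    · intro hxp
      apply hnA
      rw [Finset.mem_image]
      refine ⟨y, ?_, by rw [hxp]⟩
      rw [Finset.mem_erase, Set.Finite.mem_toFinset]
      exact ⟨fun hyq => hne (by rw [hxp, hyq]), hxp ▸ hadj⟩
    · intro hxz
      have hyp' : y ∈ U.neighborSet z := hxz ▸ hadj
      rw [hleaf, Set.mem_singleton_iff] at hyp'
      apply hnA
      rw [Finset.mem_image]
      refine ⟨z, ?_, by rw [hxz, hyp']; exact Sym2.eq_swap⟩
      rw [Finset.mem_erase, Set.Finite.mem_toFinset]
      exact ⟨hzq', hpz⟩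
  have hvan : ∀ e ∈ (EF U).erase s(p,q),
      e ∉ ((U.neighborSet p).toFinite.toFinset.erase q).image (fun u => s(p,u)) →
      wf l (swap U p q z) e - wf l U e = 0 := by
    intro e he hea
    induction e with
    | _ x y =>
      rw [Finset.mem_erase, mem_EF, mem_edgeSet] at he
      obtain ⟨hne, hadj⟩ := he
      have h1 := claim x y hadj hne hea
      have h2 := claim y x hadj.symm (by rwa [Sym2.eq_swap]) (by rwa [Sym2.eq_swap])
      rw [wf_mk, wf_mk, swap_deg_other hpq hzq hzp hzq' h1.1 h1.2,
        swap_deg_other hpq hzq hzp hzq' h2.1 h2.2]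
      ring
  have hzS : z ∈ (U.neighborSet p).toFinite.toFinset.erase q := by
    rw [Finset.mem_erase, Set.Finite.mem_toFinset]
    exact ⟨hzq', hpz⟩
  have hterm : ∀ u ∈ ((U.neighborSet p).toFinite.toFinset.erase q).erase z,
      wf l (swap U p q z) s(p,u) - wf l U s(p,u) = -((deg U u : ℝ) + l) := by
    intro u hu
    rw [Finset.mem_erase, Finset.mem_erase, Set.Finite.mem_toFinset] at hu
    have hup : u ≠ p := (SimpleGraph.Adj.ne hu.2.2).symm
    rw [wf_mk, wf_mk, swap_deg_p hpq hzq hzp hzq',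
      swap_deg_other hpq hzq hzp hzq' hup hu.1, Nat.cast_sub hdp1]
    push_cast
    ring
  rw [grm_key l hpq hzq hzp hzq',
    ← Finset.sum_subset (A_subset hpq) hvan, sum_A_eq,
    show (U.neighborSet p).toFinite.toFinset.erase q
        = insert z (((U.neighborSet p).toFinite.toFinset.erase q).erase z) from
      (Finset.insert_erase hzS).symm]
  rw [Finset.sum_insert (Finset.notMem_erase _ _)]
  rw [Finset.sum_congr rfl hterm]
  rw [Finset.erase_insert (Finset.notMem_erase _ _)]
  rw [wf_mk, wf_mk, wf_mk, wf_mk,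
    swap_deg_p hpq hzq hzp hzq', swap_deg_z hpq hzq hzp hzq',
    swap_deg_other hpq hzq hzp hzq' hqp hqz, hdz, Nat.cast_sub hdp1]
  push_cast
  rw [Finset.sum_neg_distrib]
  ring

lemma grm_diff_caseII (hnpz : ¬ U.Adj p z) {y : V} (hleaf : U.neighborSet z = {y})
    (hyp : y ≠ p) (hyq : y ≠ q) :
    GRM l (swap U p q z) - GRM l U
      = ((deg U y : ℝ) + l) + (2 - (deg U p : ℝ)) * ((deg U q : ℝ) + l)
        - ∑ u ∈ (U.neighborSet p).toFinite.toFinset.erase q, ((deg U u : ℝ) + l) := by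
  have hzy : U.Adj z y := by
    have : y ∈ U.neighborSet z := by rw [hleaf]; exact rfl
    exact this
  have hyz : y ≠ z := fun h => (h ▸ hzy).ne' rfl
  have hdz : deg U z = 1 := by rw [deg_eq_ncard, hleaf, Set.ncard_singleton]
  have hdp1 : 1 ≤ deg U p := one_le_deg hpq
  have hqp : q ≠ p := hpq.ne'
  have hqz : q ≠ z := fun h => hzq' h.symm
  -- the modified edge collection: A' = insert s(z,y) A
  have hzyA : s(z,y) ∉ ((U.neighborSet p).toFinite.toFinset.erase q).image
      (fun u => s(p,u)) := by
    rw [Finset.mem_image]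
    rintro ⟨u, hu, he⟩
    rcases Sym2.eq_iff.mp he with ⟨h1, -⟩ | ⟨h1, -⟩
    · exact hzp h1.symm
    · exact hyp h1.symm
  have hsubA' : insert s(z,y) (((U.neighborSet p).toFinite.toFinset.erase q).image
      (fun u => s(p,u))) ⊆ (EF U).erase s(p,q) := by
    rw [Finset.insert_subset_iff]
    refine ⟨?_, A_subset hpq⟩
    rw [Finset.mem_erase, mem_EF, mem_edgeSet]
    refine ⟨fun he' => ?_, hzy⟩
    rcases Sym2.eq_iff.mp he' with ⟨h1, -⟩ | ⟨h1, -⟩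
    · exact hzp h1
    · exact hzq' h1
  have claim : ∀ x w : V, U.Adj x w → s(x,w) ≠ s(p,q) →
      s(x,w) ∉ insert s(z,y) (((U.neighborSet p).toFinite.toFinset.erase q).image
        (fun u => s(p,u))) →
      x ≠ p ∧ x ≠ z := by
    intro x w hadj hne hnA
    rw [Finset.mem_insert] at hnA
    push_neg at hnA
    constructor
    · intro hxp
      apply hnA.2
      rw [Finset.mem_image]
      refine ⟨w, ?_, by rw [hxp]⟩
      rw [Finset.mem_erase, Set.Finite.mem_toFinset]
      exact ⟨fun hyq' => hne (by rw [hxp, hyq']), hxp ▸ hadj⟩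
    · intro hxz
      have hyp' : w ∈ U.neighborSet z := hxz ▸ hadj
      rw [hleaf, Set.mem_singleton_iff] at hyp'
      exact hnA.1 (by rw [hxz, hyp'])
  have hvan : ∀ e ∈ (EF U).erase s(p,q),
      e ∉ insert s(z,y) (((U.neighborSet p).toFinite.toFinset.erase q).image
        (fun u => s(p,u))) →
      wf l (swap U p q z) e - wf l U e = 0 := by
    intro e he hea
    induction e with
    | _ x w =>
      rw [Finset.mem_erase, mem_EF, mem_edgeSet] at he
      obtain ⟨hne, hadj⟩ := he
      have h1 := claim x w hadj hne hea
      have h2 := claim w x hadj.symm (by rwa [Sym2.eq_swap])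
        (by rwa [Sym2.eq_swap (a := w) (b := x)])
      rw [wf_mk, wf_mk, swap_deg_other hpq hzq hzp hzq' h1.1 h1.2,
        swap_deg_other hpq hzq hzp hzq' h2.1 h2.2]
      ring
  have hterm : ∀ u ∈ (U.neighborSet p).toFinite.toFinset.erase q,
      wf l (swap U p q z) s(p,u) - wf l U s(p,u) = -((deg U u : ℝ) + l) := by
    intro u hu
    rw [Finset.mem_erase, Set.Finite.mem_toFinset] at hu
    have hup : u ≠ p := (SimpleGraph.Adj.ne hu.2).symm
    have huz : u ≠ z := fun h => hnpz (h ▸ hu.2)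
    rw [wf_mk, wf_mk, swap_deg_p hpq hzq hzp hzq',
      swap_deg_other hpq hzq hzp hzq' hup huz, Nat.cast_sub hdp1]
    push_cast
    ring
  rw [grm_key l hpq hzq hzp hzq', ← Finset.sum_subset hsubA' hvan,
    Finset.sum_insert hzyA, sum_A_eq, Finset.sum_congr rfl hterm]
  rw [wf_mk, wf_mk, wf_mk, wf_mk,
    swap_deg_z hpq hzq hzp hzq', swap_deg_other hpq hzq hzp hzq' hqp hqz,
    swap_deg_other hpq hzq hzp hzq' hyp hyz, hdz]
  push_cast
  rw [Finset.sum_neg_distrib]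
  ring
end Diff

end ZagAux

open ZagAux in
theorem stmt9 {V : Type*} [Fintype V] (l : ℝ) (hl : -1/2 ≤ l)
    (n Δ : ℕ) (hΔ3 : 3 ≤ Δ) (U : SimpleGraph V) (hU : IsUnicyclic U)
    (hcard : Fintype.card V = n) (hmax : maxDeg U = Δ)
    (a : V) (ha : deg U a = Δ) (hacyc : OnCycle U a)
    (b : V) (hba : b ≠ a) (hb : 3 ≤ deg U b) :
    ∃ U' : SimpleGraph V, IsUnicyclic U' ∧ maxDeg U' = Δ ∧
      GRM l U' < GRM l U := by
  classical
  obtain ⟨hconn, hcount⟩ := hU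
  have hdegle : ∀ v, deg U v ≤ Δ := fun v => hmax ▸ le_maxDeg U v
  have hdeg1 : ∀ v, 1 ≤ deg U v := by
    intro v
    by_cases hv : v = a
    · exact deg_pos hconn (show v ≠ b from fun h => hba (by rw [← h, hv]))
    · exact deg_pos hconn hv
  -- the common wrap-up once a good move (p,q,z) is found
  have main : ∀ p q z : V, U.Adj p q → ¬ U.Adj z q → z ≠ p → z ≠ q → p ≠ a → z ≠ a →
      deg U z = 1 → (swap U p q z).Reachable p q →
      GRM l (swap U p q z) < GRM l U →
      ∃ U' : SimpleGraph V, IsUnicyclic U' ∧ maxDeg U' = Δ ∧ GRM l U' < GRM l U := by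
    intro p q z hpq hzq hzp hzq' hpa hza hz1 hreach hgrm
    refine ⟨swap U p q z, ⟨swap_connected hzq' hconn hreach, ?_⟩, ?_, hgrm⟩
    · rw [swap_ncard hpq hzq hzp hzq']
      exact hcount
    · refine maxDeg_eq_of a ?_ ?_
      · rw [swap_deg_other hpq hzq hzp hzq' (fun h => hpa h.symm) (fun h => hza h.symm)]
        exact ha
      · intro v
        by_cases hvp : v = p
        · subst hvp
          rw [swap_deg_p hpq hzq hzp hzq']
          have := hdegle v
          omega
        · by_cases hvz : v = z
          · subst hvz
            rw [swap_deg_z hpq hzq hzp hzq', hz1]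
            omega
          · rw [swap_deg_other hpq hzq hzp hzq' hvp hvz]
            exact hdegle v
  by_cases hC1 : ∃ p, p ≠ a ∧ 3 ≤ deg U p ∧ ∃ z, U.Adj p z ∧ deg U z = 1
  · -- Case I : a branch vertex p ≠ a with a pendant leaf z
    obtain ⟨p, hpa, hp3, z, hpz, hz1⟩ := hC1
    have hNz : U.neighborSet z = {p} := leaf_nbhd hz1 hpz.symm
    have hza : z ≠ a := by
      intro h
      rw [h, ha] at hz1
      omega
    -- find a neighbor u₀ of p with degree ≥ 2
    obtain ⟨W0⟩ := hconn p a
    obtain ⟨u₀, hpu₀, W', hWeq⟩ := W0.toPath.val.exists_eq_cons_of_ne hpa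
    have hu₀2 : 2 ≤ deg U u₀ := by
      by_cases hu₀a : u₀ = a
      · rw [hu₀a, ha]
        omega
      · obtain ⟨x₂, hu₀x₂, W'', hWeq2⟩ := W'.exists_eq_cons_of_ne hu₀a
        have hPpath : (Walk.cons hpu₀ W').IsPath := by
          rw [← hWeq]
          exact W0.toPath.2
        have hpW' : p ∉ W'.support := (Walk.cons_isPath_iff _ _ |>.mp hPpath).2
        have hx₂p : x₂ ≠ p := by
          intro h
          apply hpW'
          rw [hWeq2, Walk.support_cons, ← h]
          exact List.mem_cons_of_mem _ W''.start_mem_support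
        exact two_le_deg hpu₀.symm hu₀x₂ (fun h => hx₂p (h.symm ▸ rfl))
    -- the move : delete p-u₀, add z-u₀
    have hzu₀ : ¬ U.Adj z u₀ := by
      intro h
      have : u₀ ∈ U.neighborSet z := h
      rw [hNz, Set.mem_singleton_iff] at this
      exact hpu₀.ne' this
    have hzp' : z ≠ p := hpz.ne'
    have hzu₀' : z ≠ u₀ := by
      intro h
      rw [← h] at hu₀2
      omega
    have hreach : (swap U p u₀ z).Reachable p u₀ := by
      have h1 : (swap U p u₀ z).Adj p z := by
        rw [swap_adj hzu₀']
        refine Or.inl ⟨hpz, fun h => ?_⟩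
        rcases Sym2.eq_iff.mp h with ⟨-, h2⟩ | ⟨h2, -⟩
        · exact hzu₀' h2
        · exact hpu₀.ne h2
      have h2 : (swap U p u₀ z).Adj z u₀ := by
        rw [swap_adj hzu₀']
        exact Or.inr rfl
      exact h1.reachable.trans h2.reachable
    refine main p u₀ z hpu₀ hzu₀ hzp' hzu₀' hpa hza hz1 hreach ?_
    have hdiff := grm_diff_caseI l hpu₀ hzu₀ hzp' hzu₀' hpz hNz
    have hsum : 0 ≤ ∑ u ∈ ((U.neighborSet p).toFinite.toFinset.erase u₀).erase z,
        ((deg U u : ℝ) + l) := by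
      apply Finset.sum_nonneg
      intro u hu
      have := hdeg1 u
      have : (1 : ℝ) ≤ (deg U u : ℝ) := by exact_mod_cast this
      linarith
    have hd3 : (3 : ℝ) ≤ (deg U p : ℝ) := by exact_mod_cast hp3
    have hdu : (2 : ℝ) ≤ (deg U u₀ : ℝ) := by exact_mod_cast hu₀2
    nlinarith [hdiff, hsum, hd3, hdu]
  · -- Case II : no branch vertex other than a has a pendant leaf
    push_neg at hC1
    have ha3 : 3 ≤ deg U a := by rw [ha]; exact hΔ3
    obtain ⟨r, s, hAr, hrs, hsa, hdegr, hdegs, ⟨Wrs, hWrsE⟩, hleafnot, r', hAr', hr'r, hdegr'⟩ :=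
      cycle_struct hacyc ha3
    -- find a leaf z whose unique neighbor has degree ≤ 2
    have hzex : ∃ z y : V, deg U z = 1 ∧ U.Adj z y ∧ deg U y ≤ 2 := by
      by_contra hno
      push_neg at hno
      set L : Finset V := Finset.univ.filter (fun v => deg U v = 1) with hL
      have hLa : ∀ v ∈ L, U.Adj a v := by
        intro v hv
        rw [hL, Finset.mem_filter] at hv
        obtain ⟨y, hy⟩ := Set.ncard_eq_one.mp ((deg_eq_ncard U v) ▸ hv.2)
        have hvy : U.Adj v y := by
          have : y ∈ U.neighborSet v := by rw [hy]; exact rfl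
          exact this
        have hy3 : 3 ≤ deg U y := by
          have := hno v y hv.2 hvy
          omega
        have hya : y = a := by
          by_contra hya
          exact hC1 y hya hy3 v hvy.symm hv.2
        exact (hya ▸ hvy).symm
      -- upper bound : |L| ≤ Δ - 2
      have hrL : r ∉ L := by
        rw [hL, Finset.mem_filter]
        rintro ⟨-, h⟩
        omega
      have hr'L : r' ∉ L := by
        rw [hL, Finset.mem_filter]
        rintro ⟨-, h⟩
        omega
      have hsubL : L ⊆ ((U.neighborSet a).toFinite.toFinset.erase r).erase r' := by
        intro v hv
        rw [Finset.mem_erase, Finset.mem_erase, Set.Finite.mem_toFinset]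
        exact ⟨fun h => hr'L (h ▸ hv), fun h => hrL (h ▸ hv), hLa v hv⟩
      have hcardNa : (U.neighborSet a).toFinite.toFinset.card = Δ := by
        rw [← Set.ncard_eq_toFinset_card, ← deg_eq_ncard, ha]
      have hrNa : r ∈ (U.neighborSet a).toFinite.toFinset := by
        rw [Set.Finite.mem_toFinset]; exact hAr
      have hr'Na : r' ∈ (U.neighborSet a).toFinite.toFinset.erase r := by
        rw [Finset.mem_erase, Set.Finite.mem_toFinset]; exact ⟨hr'r, hAr'⟩
      have hLle : L.card ≤ Δ - 2 := by
        have := Finset.card_le_card hsubL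
        rw [Finset.card_erase_of_mem hr'Na, Finset.card_erase_of_mem hrNa, hcardNa] at this
        omega
      -- lower bound : |L| ≥ Δ - 1
      have haL : a ∉ L := by
        rw [hL, Finset.mem_filter]
        rintro ⟨-, h⟩
        omega
      have hbL : b ∉ L := by
        rw [hL, Finset.mem_filter]
        rintro ⟨-, h⟩
        omega
      set R : Finset V := (Finset.univ.erase b).erase a with hR
      have hLsubR : L ⊆ R := by
        intro v hv
        rw [hR, Finset.mem_erase, Finset.mem_erase]
        exact ⟨fun h => haL (h ▸ hv), fun h => hbL (h ▸ hv), Finset.mem_univ v⟩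
      have hsum1 : ∑ v, deg U v = deg U b + ∑ v ∈ Finset.univ.erase b, deg U v :=
        (Finset.add_sum_erase _ _ (Finset.mem_univ b)).symm
      have hsum2 : ∑ v ∈ Finset.univ.erase b, deg U v = deg U a + ∑ v ∈ R, deg U v := by
        rw [hR]
        exact (Finset.add_sum_erase _ _ (by
          rw [Finset.mem_erase]; exact ⟨hba.symm, Finset.mem_univ a⟩)).symm
      have hsumR : ∑ v ∈ R, deg U v = (∑ v ∈ R \ L, deg U v) + ∑ v ∈ L, deg U v :=
        (Finset.sum_sdiff hLsubR).symm
      have hsumL : ∑ v ∈ L, deg U v = L.card := by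
        rw [Finset.card_eq_sum_ones]
        apply Finset.sum_congr rfl
        intro v hv
        rw [hL, Finset.mem_filter] at hv
        exact hv.2
      have hsumRL : (R \ L).card * 2 ≤ ∑ v ∈ R \ L, deg U v := by
        have := Finset.card_nsmul_le_sum (R \ L) (fun v => deg U v) 2 ?_
        · simpa using this
        · intro v hv
          show 2 ≤ deg U v
          rw [Finset.mem_sdiff] at hv
          have h1 := hdeg1 v
          have h2 : deg U v ≠ 1 := by
            intro h
            exact hv.2 (by rw [hL, Finset.mem_filter]; exact ⟨Finset.mem_univ v, h⟩)
          omega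
      have hcardR : R.card = n - 2 := by
        rw [hR, Finset.card_erase_of_mem (by
          rw [Finset.mem_erase]; exact ⟨hba.symm, Finset.mem_univ a⟩),
          Finset.card_erase_of_mem (Finset.mem_univ b), Finset.card_univ, hcard]
        omega
      have hRL : (R \ L).card = R.card - L.card := Finset.card_sdiff_of_subset hLsubR
      have hLR : L.card ≤ R.card := Finset.card_le_card hLsubR
      have h2n : ∑ v, deg U v = 2 * n := by
        rw [sum_deg U, hcount, hcard]
      have hn2 : 2 ≤ n := by
        rw [← hcard]
        have : ({a, b} : Finset V).card ≤ Fintype.card V := by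
          rw [← Finset.card_univ]
          exact Finset.card_le_card (Finset.subset_univ _)
        rw [Finset.card_insert_of_notMem (by simpa using Ne.symm hba),
          Finset.card_singleton] at this
        omega
      rw [ha] at hsum2
      omega
    -- use the leaf z with small neighbor
    obtain ⟨z, y, hz1, hzy, hy2⟩ := hzex
    have hNz : U.neighborSet z = {y} := leaf_nbhd hz1 hzy
    have hznbr : ∀ w, U.Adj z w → deg U w ≤ 2 := by
      intro w hw
      have : w ∈ U.neighborSet z := hw
      rw [hNz, Set.mem_singleton_iff] at this
      exact this ▸ hy2
    obtain ⟨hnzr, hnzs⟩ := hleafnot z hz1 hznbr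
    have hzr : z ≠ r := by
      intro h
      rw [← h] at hdegr
      omega
    have hzs : z ≠ s := by
      intro h
      rw [← h] at hdegs
      omega
    have hza : z ≠ a := by
      intro h
      rw [h, ha] at hz1
      omega
    have hra : r ≠ a := hAr.ne'
    have hnrz : ¬ U.Adj r z := fun h => hnzr h.symm
    have hyr : y ≠ r := fun h => hnzr (h ▸ hzy)
    have hys : y ≠ s := fun h => hnzs (h ▸ hzy)
    have hreach : (swap U r s z).Reachable r s := by
      have hsub : ∀ e ∈ Wrs.edges, e ∈ (swap U r s z).edgeSet := by
        intro e he
        rw [swap_edgeSet hrs hnzs hzr hzs]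
        exact Or.inl ⟨Wrs.edges_subset_edgeSet he, fun h => hWrsE (h ▸ he)⟩
      exact (Wrs.transfer _ hsub).reachable
    refine main r s z hrs hnzs hzr hzs hra hza hz1 hreach ?_
    have hdiff := grm_diff_caseII l hrs hnzs hzr hzs hnrz hNz hyr hys
    -- bound the sum from below : contains a, everything ≥ 1
    have haS : a ∈ (U.neighborSet r).toFinite.toFinset.erase s := by
      rw [Finset.mem_erase, Set.Finite.mem_toFinset]
      exact ⟨fun h => hsa h.symm, hAr.symm⟩
    have hsum : ((deg U a : ℝ) + l)
        + (((U.neighborSet r).toFinite.toFinset.erase s).card - 1 : ℕ) * (1 + l)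
        ≤ ∑ u ∈ (U.neighborSet r).toFinite.toFinset.erase s, ((deg U u : ℝ) + l) := by
      rw [← Finset.add_sum_erase _ _ haS]
      have h1 : (((U.neighborSet r).toFinite.toFinset.erase s).erase a).card
          = ((U.neighborSet r).toFinite.toFinset.erase s).card - 1 :=
        Finset.card_erase_of_mem haS
      have h2 := Finset.card_nsmul_le_sum
        (((U.neighborSet r).toFinite.toFinset.erase s).erase a)
        (fun u => (deg U u : ℝ) + l) (1 + l) ?_
      · rw [h1] at h2
        rw [nsmul_eq_mul] at h2
        linarith
      · intro u hu
        show 1 + l ≤ (deg U u : ℝ) + l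
        have h3 : (1 : ℝ) ≤ (deg U u : ℝ) := by exact_mod_cast hdeg1 u
        linarith
    have hScard : ((U.neighborSet r).toFinite.toFinset.erase s).card = deg U r - 1 := by
      rw [Finset.card_erase_of_mem (by rw [Set.Finite.mem_toFinset]; exact hrs),
        ← Set.ncard_eq_toFinset_card, ← deg_eq_ncard]
    have hd2 : (2 : ℝ) ≤ (deg U r : ℝ) := by exact_mod_cast hdegr
    have hds1 : (1 : ℝ) ≤ (deg U s : ℝ) := by exact_mod_cast hdeg1 s
    have hdy2 : ((deg U y : ℝ)) ≤ 2 := by exact_mod_cast hy2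
    have hdaΔ : ((deg U a : ℝ)) = (Δ : ℝ) := by rw [ha]
    have hΔ3' : (3 : ℝ) ≤ (Δ : ℝ) := by exact_mod_cast hΔ3
    have hcast : ((((U.neighborSet r).toFinite.toFinset.erase s).card - 1 : ℕ) : ℝ)
        = (deg U r : ℝ) - 2 := by
      rw [hScard, show deg U r - 1 - 1 = deg U r - 2 from by omega, Nat.cast_sub hdegr]
      norm_num
    rw [hcast] at hsum
    have h1 : 0 ≤ ((deg U r : ℝ) - 2) * ((deg U s : ℝ) + l) :=
      mul_nonneg (by linarith) (by linarith)
    have h2 : 0 ≤ ((deg U r : ℝ) - 2) * (1 + l) :=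
      mul_nonneg (by linarith) (by linarith)
    nlinarith [hdiff, hsum, h1, h2, hdy2, hdaΔ, hΔ3', hl]
end

section
/- Let λ be a real number and Δ ≥ 3. Let U be a unicyclic graph with n vertices and maximum degree Δ having a vertex a with deg_U(a) = Δ such that: a does not lie on the cycle of U, a is adjacent to Δ-1 leaves, there is a vertex b on the cycle of U with d_U(a,b) = 1 and deg_U(b) = 3, and every vertex c ∉ {a,b} satisfies 1 ≤ deg_U(c) ≤ 2. Then GRM_λ(U) = (Δ+λ)(Δ+Δλ+2) + (n-Δ)(2+λ)² + 2(2+λ). -/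
open SimpleGraph

theorem stmt12 {V : Type*} [Fintype V] (l : ℝ) (n Δ : ℕ) (hΔ3 : 3 ≤ Δ)
    (U : SimpleGraph V) (hU : IsUnicyclic U)
    (hcard : Fintype.card V = n) (hmax : maxDeg U = Δ)
    (a : V) (ha : deg U a = Δ) (hacyc : ¬ OnCycle U a)
    (hleaves : {v : V | U.Adj a v ∧ deg U v = 1}.ncard = Δ - 1)
    (b : V) (hbcyc : OnCycle U b) (hdist : U.dist a b = 1) (hdegb : deg U b = 3)
    (hother : ∀ c : V, c ≠ a → c ≠ b → 1 ≤ deg U c ∧ deg U c ≤ 2) :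
    GRM l U = ((Δ : ℝ) + l) * ((Δ : ℝ) + (Δ : ℝ) * l + 2)
      + ((n : ℝ) - (Δ : ℝ)) * (2 + l) ^ 2 + 2 * (2 + l) := by
  letI := Classical.decEq V
  letI : DecidableRel U.Adj := Classical.decRel _
  have hdeg : ∀ v, deg U v = U.degree v := fun v => rfl
  rw [hdeg] at ha hdegb
  simp only [hdeg] at hother hleaves
  have hab : U.Adj a b := dist_eq_one_iff_adj.mp hdist
  have hne : a ≠ b := hab.ne
  -- leaf finset
  have hLcard : ({v ∈ Finset.univ | U.Adj a v ∧ U.degree v = 1} : Finset V).card = Δ - 1 := by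
    rw [← hleaves, Set.ncard_eq_toFinset_card']
    congr 1
    ext v
    simp
  set Lf : Finset V := {v ∈ Finset.univ | U.Adj a v ∧ U.degree v = 1} with hLf
  -- edge count
  have hecard : U.edgeFinset.card = n := by
    have := hU.2
    rw [Set.ncard_eq_toFinset_card'] at this
    rw [← hcard, ← this]
    congr 1
  -- every degree-one vertex is adjacent to a
  set K : Finset V := {v ∈ Finset.univ | U.degree v = 1} with hK
  have hKcard : K.card + 1 = Δ := by
    have hsum : ∑ v, U.degree v = 2 * n := by
      rw [U.sum_degrees_eq_twice_card_edges, hecard]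
    have habs : ({a, b} : Finset V) ⊆ Finset.univ := by simp
    have hcard2 : (Finset.univ \ ({a, b} : Finset V)).card + 2 = n := by
      rw [Finset.card_sdiff_of_subset habs, Finset.card_pair hne, Finset.card_univ, hcard]
      have : 2 ≤ n := by
        rw [← hcard, ← Finset.card_univ]
        exact Finset.one_lt_card.mpr ⟨a, by simp, b, by simp, hne⟩
      omega
    have hsplit : ∑ v, U.degree v
        = U.degree a + U.degree b + ∑ v ∈ Finset.univ \ {a, b}, U.degree v := by
      rw [← Finset.sum_sdiff habs]
      have : ∑ v ∈ ({a, b} : Finset V), U.degree v = U.degree a + U.degree b := by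
        rw [Finset.sum_pair hne]
      omega
    have hrest : ∑ v ∈ Finset.univ \ ({a, b} : Finset V), U.degree v
        = ∑ v ∈ Finset.univ \ ({a, b} : Finset V), (if v ∈ K then 1 else 2) := by
      refine Finset.sum_congr rfl fun v hv => ?_
      simp only [Finset.mem_sdiff, Finset.mem_insert, Finset.mem_singleton] at hv
      push_neg at hv
      obtain ⟨h1, h2⟩ := hother v hv.2.1 hv.2.2
      have hK' : v ∈ K ↔ U.degree v = 1 := by simp [hK]
      by_cases hd : U.degree v = 1
      · rw [hd, if_pos (hK'.mpr hd)]
      · rw [if_neg (fun h => hd (hK'.mp h))]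
        omega
    have hite : ∑ v ∈ Finset.univ \ ({a, b} : Finset V), (if v ∈ K then 1 else 2)
        = ((Finset.univ \ ({a, b} : Finset V)).filter (fun v => v ∈ K)).card * 1
          + ((Finset.univ \ ({a, b} : Finset V)).filter (fun v => ¬ v ∈ K)).card * 2 := by
      rw [Finset.sum_ite, Finset.sum_const, Finset.sum_const, smul_eq_mul, smul_eq_mul]
    have hfK : ((Finset.univ \ ({a, b} : Finset V)).filter (fun v => v ∈ K)) = K := by
      ext v
      simp only [Finset.mem_filter, Finset.mem_sdiff, Finset.mem_univ, true_and,
        Finset.mem_insert, Finset.mem_singleton, hK]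
      constructor
      · tauto
      · intro h
        refine ⟨?_, h⟩
        rintro (rfl | rfl)
        · omega
        · omega
    have hpart : ((Finset.univ \ ({a, b} : Finset V)).filter (fun v => v ∈ K)).card
        + ((Finset.univ \ ({a, b} : Finset V)).filter (fun v => ¬ v ∈ K)).card
        = (Finset.univ \ ({a, b} : Finset V)).card :=
      Finset.card_filter_add_card_filter_not _
    rw [hfK] at hite hpart
    rw [hrest, hite] at hsplit
    rw [ha, hdegb] at hsplit
    omega
  have hD1 : ∀ v, U.degree v = 1 → U.Adj a v := by
    have hLK : Lf = K := by
      apply Finset.eq_of_subset_of_card_le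
      · intro v hv
        simp only [hLf, Finset.mem_filter] at hv
        simp [hK, hv.2.2]
      · rw [hLcard]
        omega
    intro v hv
    have hvK : v ∈ K := by simp [hK, hv]
    rw [← hLK] at hvK
    simp only [hLf, Finset.mem_filter] at hvK
    exact hvK.2.1
  have hD2 : ∀ v u, v ≠ a → v ≠ b → U.Adj v u → u ≠ a → U.degree v = 2 := by
    intro v u hva hvb hadj hua
    obtain ⟨h1, h2⟩ := hother v hva hvb
    rcases Nat.lt_or_ge (U.degree v) 2 with h | h
    · exfalso
      have hd1 : U.degree v = 1 := by omega
      have hav : U.Adj a v := hD1 v hd1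
      have h2le : 1 < U.degree v := by
        rw [← SimpleGraph.card_neighborFinset_eq_degree]
        exact Finset.one_lt_card.mpr ⟨u, by simp [SimpleGraph.mem_neighborFinset, hadj],
          a, by simp [SimpleGraph.mem_neighborFinset, hav.symm], hua⟩
      omega
    · omega
  -- the neighborhood of a
  have hbLf : b ∉ Lf := by simp [hLf, hdegb]
  have hNa : insert b Lf = U.neighborFinset a := by
    apply Finset.eq_of_subset_of_card_le
    · intro v hv
      rcases Finset.mem_insert.mp hv with h | h
      · subst h
        simp [SimpleGraph.mem_neighborFinset, hab]
      · simp only [hLf, Finset.mem_filter] at h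
        simp [SimpleGraph.mem_neighborFinset, h.2.1]
    · rw [Finset.card_insert_of_notMem hbLf, hLcard,
        SimpleGraph.card_neighborFinset_eq_degree, ha]
      omega
  -- abstract the summand of GRM
  obtain ⟨F, hF, hGRM⟩ : ∃ F : Sym2 V → ℝ,
      (∀ x y, F s(x, y) = ((U.degree x : ℝ) + l) * ((U.degree y : ℝ) + l))
        ∧ GRM l U = ∑ e ∈ U.edgeFinset, F e := ⟨_, fun x y => rfl, rfl⟩
  rw [hGRM,
    ← Finset.sum_filter_add_sum_filter_not U.edgeFinset (fun e => a ∈ e) F,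
    ← Finset.sum_filter_add_sum_filter_not (U.edgeFinset.filter (fun e => ¬ a ∈ e))
      (fun e => b ∈ e) F]
  -- the edges at a
  have hA : U.edgeFinset.filter (fun e => a ∈ e)
      = (U.neighborFinset a).image (fun w => s(a, w)) := by
    ext e
    induction e with
    | _ x y =>
      simp only [Finset.mem_filter, SimpleGraph.mem_edgeFinset, SimpleGraph.mem_edgeSet,
        Sym2.mem_iff, Finset.mem_image, SimpleGraph.mem_neighborFinset]
      constructor
      · rintro ⟨hadj, (rfl | rfl)⟩
        · exact ⟨y, hadj, rfl⟩
        · exact ⟨x, hadj.symm, Sym2.eq_swap⟩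
      · rintro ⟨w, hw, he⟩
        rw [Sym2.eq_iff] at he
        rcases he with ⟨rfl, rfl⟩ | ⟨rfl, rfl⟩
        · exact ⟨hw, Or.inl rfl⟩
        · exact ⟨hw.symm, Or.inr rfl⟩
  -- the edges at b avoiding a
  have hB : (U.edgeFinset.filter (fun e => ¬ a ∈ e)).filter (fun e => b ∈ e)
      = ((U.neighborFinset b).erase a).image (fun w => s(b, w)) := by
    ext e
    induction e with
    | _ x y =>
      simp only [Finset.mem_filter, SimpleGraph.mem_edgeFinset, SimpleGraph.mem_edgeSet,
        Sym2.mem_iff, Finset.mem_image, Finset.mem_erase, SimpleGraph.mem_neighborFinset]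
      push_neg
      constructor
      · rintro ⟨⟨hadj, hax, hay⟩, (rfl | rfl)⟩
        · exact ⟨y, ⟨fun h => hay h.symm, hadj⟩, rfl⟩
        · exact ⟨x, ⟨fun h => hax h.symm, hadj.symm⟩, Sym2.eq_swap⟩
      · rintro ⟨w, ⟨hwa, hw⟩, he⟩
        rw [Sym2.eq_iff] at he
        rcases he with ⟨rfl, rfl⟩ | ⟨rfl, rfl⟩
        · exact ⟨⟨hw, fun h => hne h, fun h => hwa h.symm⟩, Or.inl rfl⟩
        · exact ⟨⟨hw.symm, fun h => hwa h.symm, fun h => hne h⟩, Or.inr rfl⟩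
  have hNbcard : ((U.neighborFinset b).erase a).card = 2 := by
    rw [Finset.card_erase_of_mem (by simp [SimpleGraph.mem_neighborFinset, hab.symm]),
      SimpleGraph.card_neighborFinset_eq_degree, hdegb]
  -- sum over edges at a
  have hSA : ∑ e ∈ U.edgeFinset.filter (fun e => a ∈ e), F e
      = ((Δ : ℝ) + l) * (3 + l) + (Δ - 1 : ℕ) • (((Δ : ℝ) + l) * (1 + l)) := by
    rw [hA, Finset.sum_image (fun x _ y _ h => Sym2.congr_right.mp h), ← hNa,
      Finset.sum_insert hbLf]
    congr 1
    · rw [hF, ha, hdegb]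
      push_cast
      ring
    · have h1 : ∑ w ∈ Lf, F s(a, w) = ∑ _w ∈ Lf, ((Δ : ℝ) + l) * (1 + l) := by
        refine Finset.sum_congr rfl fun w hw => ?_
        simp only [hLf, Finset.mem_filter] at hw
        rw [hF, ha, hw.2.2]
        push_cast
        ring
      rw [h1, Finset.sum_const, hLcard]
  -- sum over edges at b
  have hSB : ∑ e ∈ (U.edgeFinset.filter (fun e => ¬ a ∈ e)).filter (fun e => b ∈ e), F e
      = 2 • ((3 + l) * (2 + l)) := by
    rw [hB, Finset.sum_image (fun x _ y _ h => Sym2.congr_right.mp h)]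
    have h1 : ∑ w ∈ (U.neighborFinset b).erase a, F s(b, w)
        = ∑ _w ∈ (U.neighborFinset b).erase a, ((3 : ℝ) + l) * (2 + l) := by
      refine Finset.sum_congr rfl fun w hw => ?_
      obtain ⟨hwa, hw'⟩ := Finset.mem_erase.mp hw
      rw [SimpleGraph.mem_neighborFinset] at hw'
      have hw2 : U.degree w = 2 := hD2 w b hwa (hw'.ne).symm hw'.symm (Ne.symm hne)
      rw [hF, hdegb, hw2]
      push_cast
      ring
    rw [h1, Finset.sum_const, hNbcard]
  -- sum over the remaining edges
  have hC : ∀ e ∈ (U.edgeFinset.filter (fun e => ¬ a ∈ e)).filter (fun e => ¬ b ∈ e),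
      F e = (2 + l) ^ 2 := by
    intro e
    induction e with
    | _ x y =>
      intro he
      simp only [Finset.mem_filter, SimpleGraph.mem_edgeFinset, SimpleGraph.mem_edgeSet,
        Sym2.mem_iff] at he
      push_neg at he
      obtain ⟨⟨hadj, hax, hay⟩, hbx, hby⟩ := he
      have hx : U.degree x = 2 := hD2 x y (Ne.symm hax) (Ne.symm hbx) hadj (Ne.symm hay)
      have hy : U.degree y = 2 := hD2 y x (Ne.symm hay) (Ne.symm hby) hadj.symm (Ne.symm hax)
      rw [hF, hx, hy]
      push_cast
      ring
  have hSC : ∑ e ∈ (U.edgeFinset.filter (fun e => ¬ a ∈ e)).filter (fun e => ¬ b ∈ e), F e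
      = ((U.edgeFinset.filter (fun e => ¬ a ∈ e)).filter (fun e => ¬ b ∈ e)).card
        • ((2 + l) ^ 2) := by
    rw [Finset.sum_congr rfl hC, Finset.sum_const]
  -- cardinalities
  have hcA : (U.edgeFinset.filter (fun e => a ∈ e)).card = Δ := by
    rw [hA, Finset.card_image_of_injOn (fun x _ y _ h => Sym2.congr_right.mp h),
      SimpleGraph.card_neighborFinset_eq_degree, ha]
  have hcB : ((U.edgeFinset.filter (fun e => ¬ a ∈ e)).filter (fun e => b ∈ e)).card = 2 := by
    rw [hB, Finset.card_image_of_injOn (fun x _ y _ h => Sym2.congr_right.mp h), hNbcard]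
  have hcC : Δ + 2
      + ((U.edgeFinset.filter (fun e => ¬ a ∈ e)).filter (fun e => ¬ b ∈ e)).card = n := by
    have h1 := Finset.card_filter_add_card_filter_not
      (s := U.edgeFinset) (p := fun e => a ∈ e)
    have h2 := Finset.card_filter_add_card_filter_not
      (s := U.edgeFinset.filter (fun e => ¬ a ∈ e)) (p := fun e => b ∈ e)
    rw [hecard] at h1
    omega
  rw [hSA, hSB, hSC]
  have hΔ1 : ((Δ - 1 : ℕ) : ℝ) = (Δ : ℝ) - 1 := by
    push_cast [Nat.cast_sub (by omega : 1 ≤ Δ)]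
    ring
  have hcCR : ((((U.edgeFinset.filter (fun e => ¬ a ∈ e)).filter (fun e => ¬ b ∈ e)).card : ℕ)
      : ℝ) = (n : ℝ) - Δ - 2 := by
    have := hcC
    have h := congrArg (fun m : ℕ => (m : ℝ)) this
    push_cast at h
    linarith
  simp only [nsmul_eq_mul]
  rw [hΔ1, hcCR]
  ring
end

section
/- Let λ be a real number, Δ ≥ 3, and n a positive integer. Let U₁ be a unicyclic graph with n vertices and maximum degree Δ having a vertex a of degree Δ not on the cycle, adjacent to Δ-1 leaves, with a cycle vertex b satisfying d(a,b) = 1 and deg(b) = 3, and all other vertices of degree at most 2. Let U₂ be a unicyclic graph with n vertices and maximum degree Δ having a vertex a' of degree Δ not on the cycle, adjacent to Δ-1 leaves, whose nearest cycle vertex b' satisfies d(a',b') ≥ 2 and deg(b') = 3, and all other vertices of degree at most 2. Then GRM_λ(U₁) − GRM_λ(U₂) = Δ − 2 > 0; in particular GRM_λ(U₁) > GRM_λ(U₂). -/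
open SimpleGraph

open Finset in
lemma key {V : Type*} [Fintype V] [DecidableEq V] (G : SimpleGraph V) [DecidableRel G.Adj]
    (l : ℝ) (n Δ : ℕ) (hΔ : 3 ≤ Δ) (a b : V) (hab : a ≠ b)
    (hcard : Fintype.card V = n) (hecard : G.edgeFinset.card = n)
    (hdega : G.degree a = Δ) (hdegb : G.degree b = 3)
    (hL : ((G.neighborFinset a).filter (fun v => G.degree v = 1)).card = Δ - 1)
    (hother : ∀ c, c ≠ a → c ≠ b → G.degree c ≤ 2) :
    ∑ e ∈ G.edgeFinset,
      Sym2.lift ⟨fun x y => ((G.degree x : ℝ) + l) * ((G.degree y : ℝ) + l),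
        fun x y => by ring⟩ e
    = ((Δ:ℝ)-1)*((Δ:ℝ)+l)*(1+l) +
      (if G.Adj a b then ((Δ:ℝ)+l)*(3+l) + 2*((3:ℝ)+l)*(2+l) + ((n:ℝ)-Δ-2)*(2+l)^2
       else ((Δ:ℝ)+l)*(2+l) + 3*((3:ℝ)+l)*(2+l) + ((n:ℝ)-Δ-3)*(2+l)^2) := by
  classical
  set w : Sym2 V → ℝ := Sym2.lift ⟨fun x y => ((G.degree x : ℝ) + l) * ((G.degree y : ℝ) + l),
      fun x y => by ring⟩ with hw
  set L : Finset V := (G.neighborFinset a).filter (fun v => G.degree v = 1) with hLdef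
  have hLsub : L ⊆ G.neighborFinset a := filter_subset _ _
  have haL : a ∉ L := fun h => G.irrefl ((mem_neighborFinset _ _ _).mp (hLsub h))
  have hbL : b ∉ L := by
    intro h
    have : G.degree b = 1 := (mem_filter.mp h).2
    omega
  -- the unique non-leaf neighbor of a
  have hcardNa : (G.neighborFinset a).card = Δ := by rw [card_neighborFinset_eq_degree, hdega]
  have hsd : ((G.neighborFinset a) \ L).card = 1 := by
    rw [card_sdiff_of_subset hLsub, hcardNa, hL]; omega
  obtain ⟨v₀, hv₀⟩ := card_eq_one.mp hsd
  have hv₀mem : v₀ ∈ G.neighborFinset a \ L := hv₀ ▸ mem_singleton_self v₀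
  have hv₀Na : v₀ ∈ G.neighborFinset a := (mem_sdiff.mp hv₀mem).1
  have hv₀L : v₀ ∉ L := (mem_sdiff.mp hv₀mem).2
  have hNa : G.neighborFinset a = insert v₀ L := by
    rw [← union_sdiff_of_subset hLsub, hv₀, union_comm, ← Finset.insert_eq]
  have hv₀a : v₀ ≠ a := fun h => G.irrefl (h ▸ (mem_neighborFinset _ _ _).mp hv₀Na)
  -- leaves have a as unique neighbor
  have hleaf : ∀ v ∈ L, ∀ u, G.Adj u v → u = a := by
    intro v hv u hu
    have hd1 : G.degree v = 1 := (mem_filter.mp hv).2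
    obtain ⟨x, hx⟩ := card_eq_one.mp (by rwa [← card_neighborFinset_eq_degree] at hd1)
    have hav : a ∈ G.neighborFinset v := by
      rw [mem_neighborFinset]; exact ((mem_neighborFinset _ _ _).mp (hLsub hv)).symm
    have hu' : u ∈ G.neighborFinset v := by rw [mem_neighborFinset]; exact hu.symm
    rw [hx, mem_singleton] at hav hu'
    rw [hu', ← hav]
  -- degree classification
  have hclass : ∀ v, v ≠ a → v ≠ b → v ∉ L → G.degree v = 2 := by
    intro v hva hvb hvL
    set T : Finset V := insert a (insert b L) with hT
    have hbT : b ∉ insert b L → False := fun h => h (mem_insert_self _ _)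
    have haT' : a ∉ insert b L := by
      simp only [mem_insert]
      push_neg
      exact ⟨hab, haL⟩
    have hbL' : b ∉ L := hbL
    have hTcard : T.card = Δ + 1 := by
      rw [hT, card_insert_of_notMem haT', card_insert_of_notMem hbL', hL]; omega
    have hsumL : ∑ v ∈ L, G.degree v = Δ - 1 := by
      rw [← hL]
      exact Finset.sum_congr rfl (fun x hx => (mem_filter.mp hx).2) |>.trans (by
        simp [hLdef])
    have hsumT : ∑ v ∈ T, G.degree v = 2 * Δ + 2 := by
      rw [hT, Finset.sum_insert haT', Finset.sum_insert hbL', hdega, hdegb, hsumL]; omega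
    have hsumU : ∑ v : V, G.degree v = 2 * n := by
      rw [G.sum_degrees_eq_twice_card_edges, hecard]
    have hTsub : T ⊆ univ := subset_univ _
    have hsplit : ∑ v ∈ univ \ T, G.degree v + ∑ v ∈ T, G.degree v = ∑ v : V, G.degree v :=
      Finset.sum_sdiff hTsub
    have hScard : (univ \ T).card = n - (Δ + 1) := by
      rw [card_sdiff_of_subset hTsub, card_univ, hcard, hTcard]
    have hncard : Δ + 1 ≤ n := by
      calc Δ + 1 = T.card := hTcard.symm
      _ ≤ Fintype.card V := by rw [← card_univ]; exact card_le_card hTsub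
      _ = n := hcard
    have hsumS : ∑ v ∈ univ \ T, G.degree v = 2 * (univ \ T).card := by
      rw [hScard]; omega
    have hvS : v ∈ univ \ T := by
      simp only [mem_sdiff, mem_univ, true_and, hT, mem_insert]
      push_neg
      exact ⟨hva, hvb, hvL⟩
    by_contra hne
    have hlt : G.degree v < 2 := by
      have := hother v hva hvb; omega
    have : ∑ x ∈ univ \ T, G.degree x < ∑ x ∈ univ \ T, 2 :=
      Finset.sum_lt_sum (fun i hi => by
          have hiT := (mem_sdiff.mp hi).2
          simp only [hT, mem_insert] at hiT
          push_neg at hiT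
          exact hother i hiT.1 hiT.2.1)
        ⟨v, hvS, hlt⟩
    rw [Finset.sum_const, smul_eq_mul] at this
    omega
  -- split edge sum
  have hsplit1 := Finset.sum_filter_add_sum_filter_not G.edgeFinset (fun e => a ∈ e) w
  have hsplit2 := Finset.sum_filter_add_sum_filter_not
    (G.edgeFinset.filter (fun e => ¬ a ∈ e)) (fun e => b ∈ e) w
  -- A part
  have hA : G.edgeFinset.filter (fun e => a ∈ e)
      = (G.neighborFinset a).image (fun v => s(a, v)) := by
    ext e
    refine e.ind (fun x y => ?_)
    simp only [mem_filter, mem_edgeFinset, mem_edgeSet, Sym2.mem_iff, mem_image,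
      mem_neighborFinset]
    constructor
    · rintro ⟨hadj, (rfl | rfl)⟩
      · exact ⟨y, hadj, rfl⟩
      · exact ⟨x, hadj.symm, Sym2.eq_swap⟩
    · rintro ⟨v, hv, he⟩
      obtain ⟨rfl, rfl⟩ | ⟨rfl, rfl⟩ := Sym2.eq_iff.mp he
      · exact ⟨hv, Or.inl rfl⟩
      · exact ⟨hv.symm, Or.inr rfl⟩
  have hinja : ∀ x ∈ G.neighborFinset a, ∀ y ∈ G.neighborFinset a,
      s(a, x) = s(a, y) → x = y := fun x _ y _ h => Sym2.congr_right.mp h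
  have hsumA : ∑ e ∈ G.edgeFinset.filter (fun e => a ∈ e), w e
      = ((Δ:ℝ)-1)*((Δ:ℝ)+l)*(1+l) + ((Δ:ℝ)+l)*((G.degree v₀ : ℝ)+l) := by
    rw [hA, Finset.sum_image hinja, hNa, Finset.sum_insert (by simpa using hv₀L)]
    have : ∀ v ∈ L, w s(a, v) = ((Δ:ℝ)+l)*(1+l) := by
      intro v hv
      have hd1 : G.degree v = 1 := (mem_filter.mp hv).2
      simp [hw, Sym2.lift_mk, hdega, hd1]
    rw [Finset.sum_congr rfl this, Finset.sum_const, hL]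
    have : w s(a, v₀) = ((Δ:ℝ)+l)*((G.degree v₀ : ℝ)+l) := by
      simp [hw, Sym2.lift_mk, hdega]
    rw [this, nsmul_eq_mul]
    have : ((Δ - 1 : ℕ) : ℝ) = (Δ:ℝ) - 1 := by
      have : (1:ℕ) ≤ Δ := by omega
      push_cast [this]; ring
    rw [this]; ring
  -- B part
  have hB : (G.edgeFinset.filter (fun e => ¬ a ∈ e)).filter (fun e => b ∈ e)
      = ((G.neighborFinset b) \ {a}).image (fun v => s(b, v)) := by
    ext e
    refine e.ind (fun x y => ?_)
    simp only [mem_filter, mem_edgeFinset, mem_edgeSet, Sym2.mem_iff, mem_image,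
      mem_sdiff, mem_singleton, mem_neighborFinset]
    constructor
    · rintro ⟨⟨hadj, hna⟩, (rfl | rfl)⟩
      · push_neg at hna
        exact ⟨y, ⟨hadj, fun h => hna.2 h.symm⟩, rfl⟩
      · push_neg at hna
        exact ⟨x, ⟨hadj.symm, fun h => hna.1 h.symm⟩, Sym2.eq_swap⟩
    · rintro ⟨v, ⟨hv, hva⟩, he⟩
      have hba : b ≠ a := hab.symm
      obtain ⟨rfl, rfl⟩ | ⟨rfl, rfl⟩ := Sym2.eq_iff.mp he
      · exact ⟨⟨hv, by push_neg; exact ⟨hba.symm, fun h => hva h.symm⟩⟩, Or.inl rfl⟩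
      · exact ⟨⟨hv.symm, by push_neg; exact ⟨fun h => hva h.symm, hba.symm⟩⟩, Or.inr rfl⟩
  have hinjb : ∀ x ∈ G.neighborFinset b \ {a}, ∀ y ∈ G.neighborFinset b \ {a},
      s(b, x) = s(b, y) → x = y := fun x _ y _ h => Sym2.congr_right.mp h
  have hdegNb : ∀ v ∈ G.neighborFinset b \ {a}, G.degree v = 2 := by
    intro v hv
    obtain ⟨hvN, hva⟩ := mem_sdiff.mp hv
    rw [mem_singleton] at hva
    have hvb : v ≠ b := fun h => G.irrefl (h ▸ (mem_neighborFinset _ _ _).mp hvN)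
    have hvL : v ∉ L := by
      intro hvL'
      exact hab (hleaf v hvL' b ((mem_neighborFinset _ _ _).mp hvN)).symm
    exact hclass v hva hvb hvL
  have hsumB : ∑ e ∈ (G.edgeFinset.filter (fun e => ¬ a ∈ e)).filter (fun e => b ∈ e), w e
      = ((G.neighborFinset b \ {a}).card : ℝ) * (((3:ℝ)+l)*(2+l)) := by
    rw [hB, Finset.sum_image hinjb]
    have : ∀ v ∈ G.neighborFinset b \ {a}, w s(b, v) = ((3:ℝ)+l)*(2+l) := by
      intro v hv
      simp [hw, Sym2.lift_mk, hdegb, hdegNb v hv]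
    rw [Finset.sum_congr rfl this, Finset.sum_const, nsmul_eq_mul]
  -- C part
  have hsumC : ∑ e ∈ (G.edgeFinset.filter (fun e => ¬ a ∈ e)).filter (fun e => ¬ b ∈ e), w e
      = (((G.edgeFinset.filter (fun e => ¬ a ∈ e)).filter (fun e => ¬ b ∈ e)).card : ℝ)
        * ((2:ℝ)+l)^2 := by
    rw [← nsmul_eq_mul, ← Finset.sum_const]
    refine Finset.sum_congr rfl ?_
    intro e he
    revert he
    refine e.ind (fun x y => ?_)
    intro he
    simp only [mem_filter, mem_edgeFinset, mem_edgeSet, Sym2.mem_iff] at he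
    obtain ⟨⟨hadj, hna⟩, hnb⟩ := he
    push_neg at hna hnb
    have hx : G.degree x = 2 := by
      refine hclass x (fun h => hna.1 h.symm) (fun h => hnb.1 h.symm) ?_
      intro hxL
      exact hna.2 (hleaf x hxL y hadj.symm).symm
    have hy : G.degree y = 2 := by
      refine hclass y (fun h => hna.2 h.symm) (fun h => hnb.2 h.symm) ?_
      intro hyL
      exact hna.1 (hleaf y hyL x hadj).symm
    simp [hw, Sym2.lift_mk, hx, hy]
    ring
  -- card counting
  have hcardA : (G.edgeFinset.filter (fun e => a ∈ e)).card = Δ := by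
    rw [hA, Finset.card_image_of_injOn (fun x hx y hy h => hinja x hx y hy h), hcardNa]
  have hcardB : ((G.edgeFinset.filter (fun e => ¬ a ∈ e)).filter (fun e => b ∈ e)).card
      = (G.neighborFinset b \ {a}).card := by
    rw [hB, Finset.card_image_of_injOn (fun x hx y hy h => hinjb x hx y hy h)]
  have hcount1 := Finset.card_filter_add_card_filter_not
    (s := G.edgeFinset) (p := fun e => a ∈ e)
  have hcount2 := Finset.card_filter_add_card_filter_not
    (s := G.edgeFinset.filter (fun e => ¬ a ∈ e)) (p := fun e => b ∈ e)
  by_cases hadj : G.Adj a b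
  · have haNb : a ∈ G.neighborFinset b := by rw [mem_neighborFinset]; exact hadj.symm
    have hcardNb : (G.neighborFinset b \ {a}).card = 2 := by
      rw [card_sdiff_of_subset (by simpa using haNb), card_neighborFinset_eq_degree, hdegb]
      simp
    have hv₀b : v₀ = b := by
      have hbNa : b ∈ G.neighborFinset a \ L := by
        rw [mem_sdiff, mem_neighborFinset]; exact ⟨hadj, hbL⟩
      rw [hv₀, mem_singleton] at hbNa
      exact hbNa.symm
    have hcC : (((G.edgeFinset.filter (fun e => ¬ a ∈ e)).filter (fun e => ¬ b ∈ e)).card : ℝ)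
        = (n:ℝ) - Δ - 2 := by
      have : ((G.edgeFinset.filter (fun e => ¬ a ∈ e)).filter (fun e => ¬ b ∈ e)).card
          + 2 + Δ = n := by
        rw [← hecard, ← hcount1, hcardA, ← hcount2, hcardB, hcardNb]; ring
      push_cast [← this]; ring
    rw [if_pos hadj, ← hsplit1, ← hsplit2, hsumA, hsumB, hsumC, hcC, hcardNb, hv₀b, hdegb]
    push_cast; ring
  · have haNb : a ∉ G.neighborFinset b := by
      rw [mem_neighborFinset]; exact fun h => hadj h.symm
    have hcardNb : (G.neighborFinset b \ {a}).card = 3 := by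
      rw [sdiff_singleton_eq_erase, Finset.erase_eq_of_notMem haNb,
        card_neighborFinset_eq_degree, hdegb]
    have hv₀b : v₀ ≠ b := by
      intro h
      apply hadj
      rw [← h]
      exact (mem_neighborFinset _ _ _).mp hv₀Na
    have hdv₀ : G.degree v₀ = 2 := hclass v₀ hv₀a hv₀b hv₀L
    have hcC : (((G.edgeFinset.filter (fun e => ¬ a ∈ e)).filter (fun e => ¬ b ∈ e)).card : ℝ)
        = (n:ℝ) - Δ - 3 := by
      have : ((G.edgeFinset.filter (fun e => ¬ a ∈ e)).filter (fun e => ¬ b ∈ e)).card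
          + 3 + Δ = n := by
        rw [← hecard, ← hcount1, hcardA, ← hcount2, hcardB, hcardNb]; ring
      push_cast [← this]; ring
    rw [if_neg hadj, ← hsplit1, ← hsplit2, hsumA, hsumB, hsumC, hcC, hcardNb, hdv₀]
    push_cast; ring

theorem stmt15 {V₁ V₂ : Type*} [Fintype V₁] [Fintype V₂]
    (l : ℝ) (n Δ : ℕ) (hΔ3 : 3 ≤ Δ) (hn : 0 < n)
    (U₁ : SimpleGraph V₁) (hU₁ : IsUnicyclic U₁)
    (hcard₁ : Fintype.card V₁ = n) (hmax₁ : maxDeg U₁ = Δ)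
    (a : V₁) (ha : deg U₁ a = Δ) (hacyc : ¬ OnCycle U₁ a)
    (hleaves₁ : {v : V₁ | U₁.Adj a v ∧ deg U₁ v = 1}.ncard = Δ - 1)
    (b : V₁) (hbcyc : OnCycle U₁ b) (hdist₁ : U₁.dist a b = 1)
    (hdegb : deg U₁ b = 3)
    (hother₁ : ∀ c : V₁, c ≠ a → c ≠ b → deg U₁ c ≤ 2)
    (U₂ : SimpleGraph V₂) (hU₂ : IsUnicyclic U₂)
    (hcard₂ : Fintype.card V₂ = n) (hmax₂ : maxDeg U₂ = Δ)
    (a' : V₂) (ha' : deg U₂ a' = Δ) (hacyc' : ¬ OnCycle U₂ a')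
    (hleaves₂ : {v : V₂ | U₂.Adj a' v ∧ deg U₂ v = 1}.ncard = Δ - 1)
    (b' : V₂) (hbcyc' : OnCycle U₂ b')
    (hmin' : ∀ c : V₂, OnCycle U₂ c → U₂.dist a' b' ≤ U₂.dist a' c)
    (hdist₂ : 2 ≤ U₂.dist a' b') (hdegb' : deg U₂ b' = 3)
    (hother₂ : ∀ c : V₂, c ≠ a' → c ≠ b' → deg U₂ c ≤ 2) :
    GRM l U₁ - GRM l U₂ = (Δ : ℝ) - 2 ∧ (0 : ℝ) < (Δ : ℝ) - 2 ∧
      GRM l U₂ < GRM l U₁ := by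
  letI := Classical.decEq V₁
  letI : DecidableRel U₁.Adj := Classical.decRel _
  letI := Classical.decEq V₂
  letI : DecidableRel U₂.Adj := Classical.decRel _
  simp only [deg] at ha hdegb hother₁ ha' hdegb' hother₂
  -- adjacency facts
  have hadj₁ : U₁.Adj a b := SimpleGraph.dist_eq_one_iff_adj.mp hdist₁
  have hab₁ : a ≠ b := hadj₁.ne
  have hab₂ : a' ≠ b' := by
    intro h
    rw [h, SimpleGraph.dist_self] at hdist₂
    omega
  have hnadj₂ : ¬ U₂.Adj a' b' := by
    intro h
    have h1 : U₂.dist a' b' ≤ h.toWalk.length := SimpleGraph.dist_le _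
    simp [SimpleGraph.Adj.toWalk] at h1
    omega
  -- edge counts
  have hecard₁ : U₁.edgeFinset.card = n := by
    have h2 := hU₁.2
    rw [hcard₁, ← SimpleGraph.coe_edgeFinset, Set.ncard_coe_finset] at h2
    exact h2
  have hecard₂ : U₂.edgeFinset.card = n := by
    have h2 := hU₂.2
    rw [hcard₂, ← SimpleGraph.coe_edgeFinset, Set.ncard_coe_finset] at h2
    exact h2
  -- leaf counts
  have hL₁ : ((U₁.neighborFinset a).filter (fun v => U₁.degree v = 1)).card = Δ - 1 := by
    have hset : {v : V₁ | U₁.Adj a v ∧ deg U₁ v = 1}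
        = ↑((U₁.neighborFinset a).filter (fun v => U₁.degree v = 1)) := by
      ext v
      simp [deg, SimpleGraph.mem_neighborFinset]
    rw [hset, Set.ncard_coe_finset] at hleaves₁
    exact hleaves₁
  have hL₂ : ((U₂.neighborFinset a').filter (fun v => U₂.degree v = 1)).card = Δ - 1 := by
    have hset : {v : V₂ | U₂.Adj a' v ∧ deg U₂ v = 1}
        = ↑((U₂.neighborFinset a').filter (fun v => U₂.degree v = 1)) := by
      ext v
      simp [deg, SimpleGraph.mem_neighborFinset]
    rw [hset, Set.ncard_coe_finset] at hleaves₂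
    exact hleaves₂
  have h₁ := key U₁ l n Δ hΔ3 a b hab₁ hcard₁ hecard₁ ha hdegb hL₁ hother₁
  have h₂ := key U₂ l n Δ hΔ3 a' b' hab₂ hcard₂ hecard₂ ha' hdegb' hL₂ hother₂
  rw [if_pos hadj₁] at h₁
  rw [if_neg hnadj₂] at h₂
  have hG₁ : GRM l U₁ = ((Δ:ℝ)-1)*((Δ:ℝ)+l)*(1+l) +
      (((Δ:ℝ)+l)*(3+l) + 2*((3:ℝ)+l)*(2+l) + ((n:ℝ)-Δ-2)*(2+l)^2) := by
    rw [GRM]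
    exact h₁
  have hG₂ : GRM l U₂ = ((Δ:ℝ)-1)*((Δ:ℝ)+l)*(1+l) +
      (((Δ:ℝ)+l)*(2+l) + 3*((3:ℝ)+l)*(2+l) + ((n:ℝ)-Δ-3)*(2+l)^2) := by
    rw [GRM]
    exact h₂
  have hΔR : (3:ℝ) ≤ (Δ:ℝ) := by exact_mod_cast hΔ3
  have hdiff : GRM l U₁ - GRM l U₂ = (Δ : ℝ) - 2 := by
    rw [hG₁, hG₂]; ring
  refine ⟨hdiff, by linarith, by linarith⟩
end

section
/- Let λ ≥ -1/2 be a real number, Δ ≥ 3, and n a positive integer. Let U₁ be a unicyclic graph with n vertices and maximum degree Δ having a vertex a of degree Δ not on the cycle, adjacent to Δ-1 leaves, with a cycle vertex b satisfying d(a,b) = 1 and deg(b) = 3, and all other vertices of degree at most 2. Let U₃ be a unicyclic graph with n vertices and maximum degree Δ having a vertex a' of degree Δ on the cycle, adjacent to Δ-2 leaves, with all other vertices of degree at most 2. Then GRM_λ(U₁) − GRM_λ(U₃) = 2(2+λ) > 0; in particular GRM_λ(U₁) > GRM_λ(U₃). -/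
open SimpleGraph

section Helpers
open Finset
set_option linter.unusedSectionVars false
variable {V : Type*} [Fintype V] [DecidableEq V] (G : SimpleGraph V) [DecidableRel G.Adj]

lemma sum_dart_edge (F : Sym2 V → ℝ) :
    ∑ d : G.Dart, F d.edge = 2 * ∑ e ∈ G.edgeFinset, F e := by
  rw [← Finset.sum_fiberwise_of_maps_to (g := Dart.edge) (t := G.edgeFinset)
    (fun d _ => by simp [Dart.edge_mem]), Finset.mul_sum]
  refine Finset.sum_congr rfl fun e he => ?_
  have hcard : #({d : G.Dart | d.edge = e} : Finset _) = 2 :=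
    G.dart_edge_fiber_card e (by rwa [← mem_edgeFinset])
  calc ∑ d ∈ ({d : G.Dart | d.edge = e} : Finset _), F d.edge
      = ∑ d ∈ ({d : G.Dart | d.edge = e} : Finset _), F e := by
        refine Finset.sum_congr rfl fun d hd => ?_
        simp only [Finset.mem_filter] at hd
        rw [hd.2]
    _ = 2 * F e := by rw [Finset.sum_const, hcard]; simp [two_smul]; ring

lemma sum_dart_fst (f : V → V → ℝ) :
    ∑ d : G.Dart, f d.fst d.snd = ∑ v, ∑ w ∈ G.neighborFinset v, f v w := by
  rw [← Finset.sum_fiberwise_of_maps_to (g := fun d => d.fst) (t := Finset.univ)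
    (fun d _ => Finset.mem_univ _)]
  refine Finset.sum_congr rfl fun v _ => ?_
  rw [show ({d : G.Dart | d.fst = v} : Finset _) = Finset.univ.image (G.dartOfNeighborSet v)
    from G.dart_fst_fiber v]
  rw [Finset.sum_image (fun x _ y _ h => G.dartOfNeighborSet_injective v h)]
  rw [show G.neighborFinset v = (G.neighborSet v).toFinset from rfl]
  rw [← Finset.sum_set_coe (f := fun w => f v w)]
  rfl

lemma sum_nbr_swap (g : V → ℝ) :
    ∑ v, ∑ w ∈ G.neighborFinset v, g w = ∑ w, (G.degree w : ℝ) * g w := by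
  have h : ∀ v, ∑ w ∈ G.neighborFinset v, g w = ∑ w, if G.Adj v w then g w else 0 := by
    intro v
    rw [neighborFinset_eq_filter, Finset.sum_filter]
  simp only [h]
  rw [Finset.sum_comm]
  refine Finset.sum_congr rfl fun w _ => ?_
  rw [← Finset.sum_filter]
  have : ({v | G.Adj v w} : Finset V) = G.neighborFinset w := by
    ext v; simp [adj_comm]
  rw [this, Finset.sum_const, card_neighborFinset_eq_degree]
  simp [mul_comm]

lemma two_mul_sum_edges (f : V → V → ℝ) (hf : ∀ x y, f x y = f y x) :
    2 * ∑ e ∈ G.edgeFinset, Sym2.lift ⟨f, hf⟩ e = ∑ v, ∑ w ∈ G.neighborFinset v, f v w := by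
  rw [← sum_dart_edge, ← sum_dart_fst G f]
  refine Finset.sum_congr rfl fun d _ => ?_
  rw [Dart.edge, Sym2.lift_mk]

set_option maxHeartbeats 1000000 in
lemma core (l : ℝ) (n Δ : ℕ) (hΔ3 : 3 ≤ Δ)
    (hconn : G.Connected) (hedge : #G.edgeFinset = n)
    (hcardV : Fintype.card V = n)
    (a : V) (ha : G.degree a = Δ)
    (s : Finset V) (has : a ∉ s)
    (hs : ∀ v ∈ s, G.degree v = 3 ∧ G.Adj a v)
    (hs1 : #s ≤ 1)
    (hother : ∀ c, c ≠ a → c ∉ s → G.degree c ≤ 2)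
    (hleaves : #({v | G.Adj a v ∧ G.degree v = 1} : Finset V) = Δ - 2 + #s) :
    ∑ e ∈ G.edgeFinset,
      Sym2.lift ⟨fun x y => ((G.degree x : ℝ) + l) * ((G.degree y : ℝ) + l),
        fun x y => by ring⟩ e
    = n * (2+l)^2
      + (2+l) * ((Δ:ℝ) * ((Δ:ℝ)-2) + 3 * (#s:ℝ) - ((Δ:ℝ) - 2 + (#s:ℝ)))
      - ((Δ:ℝ)-2)^2 := by
  classical
  set D : V → ℝ := fun v => (G.degree v : ℝ) with hD
  -- all degrees positive
  have hdegpos : ∀ v, 0 < G.degree v := by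
    intro v
    by_cases hv : v = a
    · subst hv; rw [ha]; omega
    · obtain ⟨p⟩ := hconn.preconnected v a
      cases p with
      | nil => exact absurd rfl hv
      | cons h _ => exact (G.degree_pos_iff_exists_adj v).mpr ⟨_, h⟩
  -- handshake
  have hsum : ∑ v, G.degree v = 2 * n := by
    rw [G.sum_degrees_eq_twice_card_edges, hedge]
  set A1 : Finset V := {v | G.Adj a v ∧ G.degree v = 1} with hA1
  set L : Finset V := {v | G.degree v = 1} with hL
  set T : Finset V := insert a s with hT
  have hTsub : T ⊆ Finset.univ := Finset.subset_univ T
  have hLR : L ⊆ Finset.univ \ T := by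
    intro v hv
    rw [hL, Finset.mem_filter] at hv
    rw [Finset.mem_sdiff, hT, Finset.mem_insert]
    refine ⟨Finset.mem_univ _, ?_⟩
    rintro (rfl | hvs)
    · rw [ha] at hv; omega
    · have := (hs v hvs).1; omega
  have hdeg2 : ∀ v ∈ (Finset.univ \ T) \ L, G.degree v = 2 := by
    intro v hv
    rw [Finset.mem_sdiff, Finset.mem_sdiff, hT, Finset.mem_insert, hL,
      Finset.mem_filter] at hv
    have h1 := hother v (fun h => hv.1.2 (Or.inl h)) (fun h => hv.1.2 (Or.inr h))
    have h2 := hdegpos v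
    have h3 : ¬ G.degree v = 1 := fun h => hv.2 ⟨Finset.mem_univ _, h⟩
    omega
  -- counting leaves
  have hLcard : #L = Δ - 2 + #s := by
    have e1 : ∑ v ∈ Finset.univ \ T, G.degree v + ∑ v ∈ T, G.degree v
        = ∑ v, G.degree v := Finset.sum_sdiff hTsub
    have eT : ∑ v ∈ T, G.degree v = Δ + #s * 3 := by
      rw [hT, Finset.sum_insert has, ha,
        Finset.sum_const_nat (fun v hv => (hs v hv).1)]
    have e2 : ∑ v ∈ (Finset.univ \ T) \ L, G.degree v + ∑ v ∈ L, G.degree v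
        = ∑ v ∈ Finset.univ \ T, G.degree v := Finset.sum_sdiff hLR
    have eL : ∑ v ∈ L, G.degree v = #L * 1 := by
      refine Finset.sum_const_nat fun v hv => ?_
      rw [hL, Finset.mem_filter] at hv; exact hv.2
    have eR2 : ∑ v ∈ (Finset.univ \ T) \ L, G.degree v = #((Finset.univ \ T) \ L) * 2 :=
      Finset.sum_const_nat hdeg2
    have c1 : #((Finset.univ \ T) \ L) + #L = #(Finset.univ \ T) :=
      Finset.card_sdiff_add_card_eq_card hLR
    have c2 : #(Finset.univ \ T) + #T = Fintype.card V := by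
      rw [Finset.card_sdiff_add_card_eq_card hTsub, Finset.card_univ]
    have c3 : #T = 1 + #s := by rw [hT, Finset.card_insert_of_notMem has]; omega
    omega
  -- all leaves adjacent to a
  have hA1L : A1 ⊆ L := by
    intro v hv
    rw [hA1, Finset.mem_filter] at hv
    rw [hL, Finset.mem_filter]
    exact ⟨Finset.mem_univ _, hv.2.2⟩
  have hA1eq : A1 = L := by
    refine Finset.eq_of_subset_of_card_le hA1L ?_
    rw [hleaves, hLcard]
  have hleafadj : ∀ v, G.degree v = 1 → G.Adj a v := by
    intro v hv
    have : v ∈ L := by rw [hL, Finset.mem_filter]; exact ⟨Finset.mem_univ _, hv⟩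
    rw [← hA1eq, hA1, Finset.mem_filter] at this
    exact this.2.1
  have huniq : ∀ v w, G.degree v = 1 → G.Adj v w → w = a := by
    intro v w hv hvw
    have hva : G.Adj v a := (hleafadj v hv).symm
    have hc : #(G.neighborFinset v) = 1 := by
      rw [card_neighborFinset_eq_degree, hv]
    obtain ⟨u, hu⟩ := Finset.card_eq_one.mp hc
    have h1 : w ∈ G.neighborFinset v := by rwa [mem_neighborFinset]
    have h2 : a ∈ G.neighborFinset v := by rwa [mem_neighborFinset]
    rw [hu, Finset.mem_singleton] at h1 h2
    rw [h1, h2]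
  -- cast of #L
  have hLcast : (#L : ℝ) = (Δ:ℝ) - 2 + (#s:ℝ) := by
    rw [hLcard]; push_cast [Nat.cast_sub (by omega : 2 ≤ Δ)]; ring
  -- S1
  have hS1 : ∑ v, D v * (D v - 2)
      = (Δ:ℝ) * ((Δ:ℝ)-2) + 3 * (#s:ℝ) - ((Δ:ℝ) - 2 + (#s:ℝ)) := by
    rw [← Finset.sum_sdiff hTsub]
    have pT : ∑ v ∈ T, D v * (D v - 2) = (Δ:ℝ) * ((Δ:ℝ)-2) + 3 * (#s:ℝ) := by
      rw [hT, Finset.sum_insert has]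
      have : ∀ v ∈ s, D v * (D v - 2) = 3 := by
        intro v hv; simp only [hD, (hs v hv).1]; norm_num
      rw [Finset.sum_congr rfl this, Finset.sum_const, nsmul_eq_mul]
      simp only [hD, ha]; ring
    have pR : ∑ v ∈ Finset.univ \ T, D v * (D v - 2) = -(#L : ℝ) := by
      rw [← Finset.sum_sdiff hLR]
      have z1 : ∀ v ∈ (Finset.univ \ T) \ L, D v * (D v - 2) = 0 := by
        intro v hv; simp only [hD, hdeg2 v hv]; norm_num
      have z2 : ∀ v ∈ L, D v * (D v - 2) = -1 := by
        intro v hv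
        rw [hL, Finset.mem_filter] at hv
        simp only [hD, hv.2]; norm_num
      rw [Finset.sum_congr rfl z1, Finset.sum_congr rfl z2]
      simp
    rw [pT, pR, hLcast]; ring
  -- sum over neighbors of a
  have hdisj : Disjoint A1 s := by
    rw [Finset.disjoint_left]
    intro w hw1 hw2
    rw [hA1, Finset.mem_filter] at hw1
    have := (hs w hw2).1
    omega
  have hPsub : A1 ∪ s ⊆ G.neighborFinset a := by
    intro w hw
    rcases Finset.mem_union.mp hw with h | h
    · rw [hA1, Finset.mem_filter] at h
      rw [mem_neighborFinset]; exact h.2.1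
    · rw [mem_neighborFinset]; exact (hs w h).2
  have hNa : ∑ w ∈ G.neighborFinset a, (D w - 2) = (#s:ℝ) - (#A1:ℝ) := by
    rw [← Finset.sum_sdiff hPsub]
    have z1 : ∀ w ∈ G.neighborFinset a \ (A1 ∪ s), D w - 2 = 0 := by
      intro w hw
      rw [Finset.mem_sdiff, mem_neighborFinset, Finset.mem_union] at hw
      have hwa : w ≠ a := fun h => G.irrefl (h ▸ hw.1)
      have hws : w ∉ s := fun h => hw.2 (Or.inr h)
      have hw1 : G.degree w ≠ 1 := by
        intro h
        exact hw.2 (Or.inl (by rw [hA1, Finset.mem_filter]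
                               exact ⟨Finset.mem_univ _, hw.1, h⟩))
      have h1 := hother w hwa hws
      have h2 := hdegpos w
      have : G.degree w = 2 := by omega
      simp only [hD, this]; norm_num
    rw [Finset.sum_congr rfl z1, Finset.sum_const_zero, Finset.sum_union hdisj]
    have z2 : ∀ w ∈ A1, D w - 2 = -1 := by
      intro w hw
      rw [hA1, Finset.mem_filter] at hw
      simp only [hD, hw.2.2]; norm_num
    have z3 : ∀ w ∈ s, D w - 2 = 1 := by
      intro w hw
      simp only [hD, (hs w hw).1]; norm_num
    rw [Finset.sum_congr rfl z2, Finset.sum_congr rfl z3, Finset.sum_const,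
      Finset.sum_const, nsmul_eq_mul, nsmul_eq_mul]
    ring
  -- the function g
  set g : V → ℝ := fun v => ∑ w ∈ G.neighborFinset v, (D v - 2) * (D w - 2) with hg
  have hga : g a = ((Δ:ℝ) - 2) * ((#s:ℝ) - (#A1:ℝ)) := by
    rw [hg]
    simp only [hD, ha]
    rw [← Finset.mul_sum]
    rw [show ∑ w ∈ G.neighborFinset a, ((G.degree w : ℝ) - 2) = (#s:ℝ) - (#A1:ℝ) from hNa]
  have hgs : ∀ v ∈ s, g v = (Δ:ℝ) - 2 := by
    intro v hv
    have hva : a ∈ G.neighborFinset v := by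
      rw [mem_neighborFinset]; exact (hs v hv).2.symm
    simp only [hg]
    rw [← Finset.sum_sdiff (Finset.singleton_subset_iff.mpr hva)]
    have z1 : ∀ w ∈ G.neighborFinset v \ {a}, (D v - 2) * (D w - 2) = 0 := by
      intro w hw
      rw [Finset.mem_sdiff, mem_neighborFinset, Finset.mem_singleton] at hw
      have hwa : w ≠ a := hw.2
      have hwv : w ≠ v := fun h => G.irrefl (h ▸ hw.1)
      have hws : w ∉ s := by
        intro h
        have : 1 < #s := Finset.one_lt_card.mpr ⟨w, h, v, hv, hwv⟩
        omega
      have hw1 : G.degree w ≠ 1 := by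
        intro h1
        have := huniq w v h1 hw.1.symm
        exact has (this ▸ hv)
      have h1 := hother w hwa hws
      have h2 := hdegpos w
      have : G.degree w = 2 := by omega
      simp only [hD, this]; norm_num
    rw [Finset.sum_congr rfl z1, Finset.sum_const_zero, Finset.sum_singleton]
    simp only [hD, ha, (hs v hv).1]
    norm_num
  have hgL : ∀ v ∈ L, g v = -((Δ:ℝ) - 2) := by
    intro v hv
    rw [hL, Finset.mem_filter] at hv
    have hva : a ∈ G.neighborFinset v := by
      rw [mem_neighborFinset]; exact (hleafadj v hv.2).symm
    have hNv : G.neighborFinset v = {a} := by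
      have hc : #(G.neighborFinset v) = 1 := by
        rw [card_neighborFinset_eq_degree, hv.2]
      obtain ⟨u, hu⟩ := Finset.card_eq_one.mp hc
      rw [hu] at hva ⊢
      rw [Finset.mem_singleton] at hva
      rw [hva]
    simp only [hg]
    rw [hNv, Finset.sum_singleton]
    simp only [hD, ha, hv.2]
    ring
  have hg2 : ∀ v ∈ (Finset.univ \ T) \ L, g v = 0 := by
    intro v hv
    have := hdeg2 v hv
    simp only [hg]
    have h0 : ∀ w ∈ G.neighborFinset v, (D v - 2) * (D w - 2) = 0 := by
      intro w _; simp only [hD, this]; norm_num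
    rw [Finset.sum_congr rfl h0, Finset.sum_const_zero]
  -- total of g
  have hgtot : ∑ v, g v = -2 * ((Δ:ℝ)-2)^2 := by
    rw [← Finset.sum_sdiff hTsub, ← Finset.sum_sdiff hLR, hT, Finset.sum_insert has]
    rw [Finset.sum_congr rfl hg2, Finset.sum_const_zero, Finset.sum_congr rfl hgL,
      Finset.sum_congr rfl hgs, Finset.sum_const, Finset.sum_const, hga,
      nsmul_eq_mul, nsmul_eq_mul]
    have hA1c : (#A1 : ℝ) = (Δ:ℝ) - 2 + (#s:ℝ) := by rw [hA1eq]; exact hLcast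
    rw [hA1c, hLcast]
    ring
  -- assembly
  have expand : ∀ v, ∑ w ∈ G.neighborFinset v,
        ((G.degree v : ℝ) + l) * ((G.degree w : ℝ) + l)
      = D v * (2+l)^2 + (2+l) * (D v * (D v - 2))
        + (2+l) * (∑ w ∈ G.neighborFinset v, (D w - 2)) + g v := by
    intro v
    have h1 : ∀ w ∈ G.neighborFinset v, ((G.degree v : ℝ) + l) * ((G.degree w : ℝ) + l)
        = ((2+l)^2 + (2+l)*(D v - 2)) + ((2+l)*(D w - 2) + (D v - 2)*(D w - 2)) := by
      intro w _; simp only [hD]; ring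
    rw [Finset.sum_congr rfl h1]
    simp only [Finset.sum_add_distrib, Finset.sum_const, card_neighborFinset_eq_degree,
      nsmul_eq_mul, ← Finset.mul_sum, hg, hD]
    ring
  have swap : ∑ v, ∑ w ∈ G.neighborFinset v, (D w - 2)
      = ∑ w, D w * (D w - 2) := by
    rw [sum_nbr_swap G (fun w => D w - 2)]
  have hDsum : ∑ v, D v = 2 * n := by
    simp only [hD]
    rw [← Nat.cast_sum, hsum]
    push_cast; ring
  have h2 : ∀ X : ℝ, 2 * X = 2*(n:ℝ)*(2+l)^2
      + 2*(2+l)*((Δ:ℝ) * ((Δ:ℝ)-2) + 3 * (#s:ℝ) - ((Δ:ℝ) - 2 + (#s:ℝ)))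
      + (-2*((Δ:ℝ)-2)^2)
      → X = (n:ℝ) * (2+l)^2
        + (2+l) * ((Δ:ℝ) * ((Δ:ℝ)-2) + 3 * (#s:ℝ) - ((Δ:ℝ) - 2 + (#s:ℝ)))
        - ((Δ:ℝ)-2)^2 := by
    intro X h; linarith
  apply h2
  rw [two_mul_sum_edges G _ (fun x y => by ring)]
  rw [Finset.sum_congr rfl (fun v _ => expand v)]
  rw [Finset.sum_add_distrib, Finset.sum_add_distrib, Finset.sum_add_distrib,
    ← Finset.sum_mul, ← Finset.mul_sum, ← Finset.mul_sum]
  rw [hDsum, hS1, swap, hS1, hgtot]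
  ring

end Helpers

theorem stmt16 {V₁ V₃ : Type*} [Fintype V₁] [Fintype V₃]
    (l : ℝ) (hl : -1/2 ≤ l) (n Δ : ℕ) (hΔ3 : 3 ≤ Δ) (hn : 0 < n)
    (U₁ : SimpleGraph V₁) (hU₁ : IsUnicyclic U₁)
    (hcard₁ : Fintype.card V₁ = n) (hmax₁ : maxDeg U₁ = Δ)
    (a : V₁) (ha : deg U₁ a = Δ) (hacyc : ¬ OnCycle U₁ a)
    (hleaves₁ : {v : V₁ | U₁.Adj a v ∧ deg U₁ v = 1}.ncard = Δ - 1)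
    (b : V₁) (hbcyc : OnCycle U₁ b) (hdist₁ : U₁.dist a b = 1)
    (hdegb : deg U₁ b = 3)
    (hother₁ : ∀ c : V₁, c ≠ a → c ≠ b → deg U₁ c ≤ 2)
    (U₃ : SimpleGraph V₃) (hU₃ : IsUnicyclic U₃)
    (hcard₃ : Fintype.card V₃ = n) (hmax₃ : maxDeg U₃ = Δ)
    (a' : V₃) (ha' : deg U₃ a' = Δ) (hacyc' : OnCycle U₃ a')
    (hleaves₃ : {v : V₃ | U₃.Adj a' v ∧ deg U₃ v = 1}.ncard = Δ - 2)
    (hother₃ : ∀ c : V₃, c ≠ a' → deg U₃ c ≤ 2) :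
    GRM l U₁ - GRM l U₃ = 2 * (2 + l) ∧ (0 : ℝ) < 2 * (2 + l) ∧
      GRM l U₃ < GRM l U₁ := by
  letI : DecidableEq V₁ := Classical.decEq V₁
  letI : DecidableRel U₁.Adj := Classical.decRel _
  letI : DecidableEq V₃ := Classical.decEq V₃
  letI : DecidableRel U₃.Adj := Classical.decRel _
  have hdeg1 : ∀ v, deg U₁ v = U₁.degree v := fun _ => rfl
  have hdeg3 : ∀ v, deg U₃ v = U₃.degree v := fun _ => rfl
  have hab : a ≠ b := fun h => hacyc (h ▸ hbcyc)
  have hadj : U₁.Adj a b := SimpleGraph.dist_eq_one_iff_adj.mp hdist₁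
  have hedge1 : U₁.edgeFinset.card = n := by
    rw [← Set.ncard_coe_finset, coe_edgeFinset, hU₁.2, hcard₁]
  have hedge3 : U₃.edgeFinset.card = n := by
    rw [← Set.ncard_coe_finset, coe_edgeFinset, hU₃.2, hcard₃]
  have hlv1 : ({v | U₁.Adj a v ∧ U₁.degree v = 1} : Finset V₁).card = Δ - 2 + ({b} : Finset V₁).card := by
    have h0 : ({v : V₁ | U₁.Adj a v ∧ deg U₁ v = 1} : Set V₁).ncard
        = ({v | U₁.Adj a v ∧ U₁.degree v = 1} : Finset V₁).card := by
      simp only [hdeg1]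
      rw [Set.ncard_eq_toFinset_card', Set.toFinset_setOf]
    rw [← h0, hleaves₁, Finset.card_singleton]
    omega
  have hlv3 : ({v | U₃.Adj a' v ∧ U₃.degree v = 1} : Finset V₃).card = Δ - 2 + (∅ : Finset V₃).card := by
    have h0 : ({v : V₃ | U₃.Adj a' v ∧ deg U₃ v = 1} : Set V₃).ncard
        = ({v | U₃.Adj a' v ∧ U₃.degree v = 1} : Finset V₃).card := by
      simp only [hdeg3]
      rw [Set.ncard_eq_toFinset_card', Set.toFinset_setOf]
    rw [← h0, hleaves₃, Finset.card_empty]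
    omega
  have key1 := core U₁ l n Δ hΔ3 hU₁.1 hedge1 hcard₁ a (hdeg1 a ▸ ha) {b}
    (by simpa using hab)
    (by intro v hv; rw [Finset.mem_singleton] at hv; rw [hv]
        exact ⟨hdeg1 b ▸ hdegb, hadj⟩)
    (by simp)
    (by intro c hca hcb; rw [Finset.mem_singleton] at hcb
        exact hdeg1 c ▸ hother₁ c hca hcb)
    hlv1
  have key3 := core U₃ l n Δ hΔ3 hU₃.1 hedge3 hcard₃ a' (hdeg3 a' ▸ ha') ∅
    (by simp)
    (by simp)
    (by simp)
    (by intro c hca _; exact hdeg3 c ▸ hother₃ c hca)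
    hlv3
  have hG1 : GRM l U₁ = n * (2+l)^2
      + (2+l) * ((Δ:ℝ) * ((Δ:ℝ)-2) + 3 * ((({b} : Finset V₁).card):ℝ)
          - ((Δ:ℝ) - 2 + ((({b} : Finset V₁).card):ℝ)))
      - ((Δ:ℝ)-2)^2 := key1
  have hG3 : GRM l U₃ = n * (2+l)^2
      + (2+l) * ((Δ:ℝ) * ((Δ:ℝ)-2) + 3 * (((∅ : Finset V₃).card):ℝ)
          - ((Δ:ℝ) - 2 + (((∅ : Finset V₃).card):ℝ)))
      - ((Δ:ℝ)-2)^2 := key3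
  have hdiff : GRM l U₁ - GRM l U₃ = 2 * (2 + l) := by
    rw [hG1, hG3, Finset.card_singleton, Finset.card_empty]
    push_cast
    ring
  have hpos : (0:ℝ) < 2 * (2 + l) := by linarith
  exact ⟨hdiff, hpos, by linarith⟩
end

section
/- Let λ be a real number, Δ ≥ 3, and n a positive integer. Let U₂ be a unicyclic graph with n vertices and maximum degree Δ having a vertex a of degree Δ not on the cycle, adjacent to Δ-1 leaves, whose nearest cycle vertex b satisfies d(a,b) ≥ 2 and deg(b) = 3, and all other vertices of degree at most 2. Let U₃ be a unicyclic graph with n vertices and maximum degree Δ having a vertex a' of degree Δ on the cycle, adjacent to Δ-2 leaves, with all other vertices of degree at most 2. Then GRM_λ(U₃) − GRM_λ(U₂) = Δ − 2λ − 6; consequently, if Δ > 2λ+6 then GRM_λ(U₃) > GRM_λ(U₂), if Δ < 2λ+6 then GRM_λ(U₂) > GRM_λ(U₃), and if Δ = 2λ+6 then GRM_λ(U₃) = GRM_λ(U₂). -/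
open SimpleGraph

section Helpers
open Finset
set_option linter.unusedSectionVars false
set_option maxHeartbeats 1000000

variable {V : Type*} [Fintype V] [DecidableEq V] (G : SimpleGraph V) [DecidableRel G.Adj]

noncomputable def fE (l : ℝ) : Sym2 V → ℝ :=
  Sym2.lift ⟨fun a b => ((G.degree a : ℝ) + l) * ((G.degree b : ℝ) + l), fun a b => by ring⟩

lemma filter_mem_eq_image (a : V) :
    G.edgeFinset.filter (fun e => a ∈ e) = (G.neighborFinset a).image (fun w => s(a, w)) := by
  ext e
  simp only [Finset.mem_filter, mem_edgeFinset, Finset.mem_image, mem_neighborFinset]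
  constructor
  · rintro ⟨he, hae⟩
    induction e with
    | _ u v =>
      rw [Sym2.mem_iff] at hae
      rcases hae with h | h
      · subst h; exact ⟨v, he, rfl⟩
      · subst h; exact ⟨u, he.symm, Sym2.eq_swap⟩
  · rintro ⟨w, hw, rfl⟩
    exact ⟨hw, Sym2.mem_mk_left a w⟩

lemma sum_over_vertex (l : ℝ) (a : V) :
    ∑ e ∈ G.edgeFinset.filter (fun e => a ∈ e), fE G l e
      = ∑ w ∈ G.neighborFinset a, ((G.degree a : ℝ) + l) * ((G.degree w : ℝ) + l) := by
  rw [filter_mem_eq_image, Finset.sum_image]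
  · exact Finset.sum_congr rfl fun w _ => by simp [fE]
  · intro x _ y _ h
    exact Sym2.congr_right.mp h

lemma card_filter_mem (a : V) :
    (G.edgeFinset.filter (fun e => a ∈ e)).card = G.degree a := by
  rw [filter_mem_eq_image, Finset.card_image_of_injective _ (fun x y h => Sym2.congr_right.mp h)]
  exact G.card_neighborFinset_eq_degree a

lemma all_two {α : Type*} (s : Finset α) (f : α → ℕ) (h : ∀ i ∈ s, f i ≤ 2)
    (hs : 2 * s.card ≤ ∑ i ∈ s, f i) : ∀ i ∈ s, f i = 2 := by
  intro i hi
  by_contra hne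
  have h1 : f i < 2 := lt_of_le_of_ne (h i hi) hne
  have h2 : ∑ j ∈ s, f j < ∑ _j ∈ s, 2 := Finset.sum_lt_sum h ⟨i, hi, h1⟩
  rw [Finset.sum_const, smul_eq_mul] at h2
  omega

set_option linter.unusedSectionVars false
set_option maxHeartbeats 1000000

lemma GRM_case3 (l : ℝ) (n Δ : ℕ) (hΔ : 3 ≤ Δ) (hcard : Fintype.card V = n)
    (hedge : G.edgeFinset.card = n) (a : V) (ha : G.degree a = Δ)
    (hleaves : ((G.neighborFinset a).filter (fun v => G.degree v = 1)).card = Δ - 2)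
    (hother : ∀ c, c ≠ a → G.degree c ≤ 2) :
    Δ ≤ n ∧ ∑ e ∈ G.edgeFinset, fE G l e
      = ((Δ - 2 : ℕ) : ℝ) * ((Δ : ℝ) + l) * (1 + l) + 2 * ((Δ : ℝ) + l) * (2 + l)
        + ((n - Δ : ℕ) : ℝ) * (2 + l) ^ 2 := by
  set L := (G.neighborFinset a).filter (fun v => G.degree v = 1) with hLdef
  have haL : a ∉ L := by simp [hLdef]
  -- the special set
  set s : Finset V := insert a L with hsdef
  have hscard : s.card = Δ - 1 := by
    rw [hsdef, Finset.card_insert_of_notMem haL, hleaves]; omega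
  have hsum_univ : ∑ v : V, G.degree v = 2 * n := by
    rw [G.sum_degrees_eq_twice_card_edges, hedge]
  have hsum_s : ∑ v ∈ s, G.degree v = Δ + (Δ - 2) := by
    rw [hsdef, Finset.sum_insert haL, ha]
    congr 1
    have : ∀ v ∈ L, G.degree v = 1 := fun v hv => (Finset.mem_filter.mp hv).2
    rw [Finset.sum_congr rfl this, Finset.sum_const, smul_eq_mul, hleaves, mul_one]
  have hnΔ1 : Δ - 1 ≤ n := by
    rw [← hscard, ← hcard, ← Finset.card_univ]
    exact Finset.card_le_card (Finset.subset_univ s)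
  have hsplit : ∑ v ∈ Finset.univ \ s, G.degree v + ∑ v ∈ s, G.degree v = 2 * n := by
    rw [Finset.sum_sdiff (Finset.subset_univ s), hsum_univ]
  have hRcard : (Finset.univ \ s).card = n - (Δ - 1) := by
    rw [Finset.card_sdiff_of_subset (Finset.subset_univ s), Finset.card_univ, hcard, hscard]
  have hR2 : ∀ v ∈ Finset.univ \ s, G.degree v = 2 := by
    apply all_two
    · intro v hv
      rw [Finset.mem_sdiff, hsdef, Finset.mem_insert] at hv
      exact hother v (fun h => hv.2 (Or.inl h))
    · rw [hRcard]; omega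
  have hdeg2 : ∀ v, v ≠ a → v ∉ L → G.degree v = 2 := by
    intro v h1 h2
    exact hR2 v (by simp [hsdef, Finset.mem_sdiff, h1, h2])
  have hdeg1 : ∀ v, G.degree v = 1 → v ∈ L := by
    intro v hv
    by_contra h
    have hva : v ≠ a := by rintro rfl; omega
    have := hdeg2 v hva h
    omega
  -- split the edge sum
  have hmain := (Finset.sum_filter_add_sum_filter_not G.edgeFinset (fun e => a ∈ e)
    (fE G l)).symm
  -- sum over edges at a
  have hsum_a : ∑ e ∈ G.edgeFinset.filter (fun e => a ∈ e), fE G l e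
      = ((Δ - 2 : ℕ) : ℝ) * ((Δ : ℝ) + l) * (1 + l) + 2 * ((Δ : ℝ) + l) * (2 + l) := by
    rw [sum_over_vertex, ha]
    rw [← Finset.sum_filter_add_sum_filter_not (G.neighborFinset a)
      (fun v => G.degree v = 1)]
    have h1 : ∑ w ∈ L, ((Δ : ℝ) + l) * ((G.degree w : ℝ) + l)
        = ((Δ - 2 : ℕ) : ℝ) * ((Δ : ℝ) + l) * (1 + l) := by
      have : ∀ w ∈ L, ((Δ : ℝ) + l) * ((G.degree w : ℝ) + l)
          = ((Δ : ℝ) + l) * (1 + l) := by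
        intro w hw
        rw [(Finset.mem_filter.mp hw).2]; norm_num
      rw [Finset.sum_congr rfl this, Finset.sum_const, hleaves, nsmul_eq_mul]; ring
    have hcard2 : ((G.neighborFinset a).filter (fun v => ¬ G.degree v = 1)).card = 2 := by
      have := Finset.card_filter_add_card_filter_not (s := G.neighborFinset a)
        (p := fun v => G.degree v = 1)
      rw [G.card_neighborFinset_eq_degree, ha] at this
      rw [← hLdef] at this
      omega
    have h2 : ∑ w ∈ (G.neighborFinset a).filter (fun v => ¬ G.degree v = 1),
        ((Δ : ℝ) + l) * ((G.degree w : ℝ) + l) = 2 * ((Δ : ℝ) + l) * (2 + l) := by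
      have : ∀ w ∈ (G.neighborFinset a).filter (fun v => ¬ G.degree v = 1),
          ((Δ : ℝ) + l) * ((G.degree w : ℝ) + l) = ((Δ : ℝ) + l) * (2 + l) := by
        intro w hw
        rw [Finset.mem_filter] at hw
        have hwa : w ≠ a := fun h =>
          G.notMem_neighborFinset_self a (h ▸ hw.1)
        have hwL : w ∉ L := fun h => hw.2 (Finset.mem_filter.mp h).2
        rw [hdeg2 w hwa hwL]; norm_num
      rw [Finset.sum_congr rfl this, Finset.sum_const, hcard2, nsmul_eq_mul]; push_cast; ring
    rw [h1, h2]
  -- edges away from a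
  have hcards : (G.edgeFinset.filter (fun e => ¬ a ∈ e)).card = n - Δ := by
    have := Finset.card_filter_add_card_filter_not (s := G.edgeFinset)
      (p := fun e => a ∈ e)
    rw [card_filter_mem, ha, hedge] at this
    omega
  have hnΔ : Δ ≤ n := by
    have := Finset.card_filter_add_card_filter_not (s := G.edgeFinset)
      (p := fun e => a ∈ e)
    rw [card_filter_mem, ha, hedge] at this
    omega
  have hsum_rest : ∑ e ∈ G.edgeFinset.filter (fun e => ¬ a ∈ e), fE G l e
      = ((n - Δ : ℕ) : ℝ) * (2 + l) ^ 2 := by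
    have hconst : ∀ e ∈ G.edgeFinset.filter (fun e => ¬ a ∈ e), fE G l e = (2 + l) ^ 2 := by
      refine Sym2.ind ?_
      intro u v he
      rw [Finset.mem_filter, mem_edgeFinset, mem_edgeSet] at he
      obtain ⟨hadj, hna⟩ := he
      rw [Sym2.mem_iff] at hna
      push_neg at hna
      have hdu : G.degree u = 2 := by
        refine hdeg2 u (fun h => hna.1 h.symm) (fun hL' => ?_)
        have h1 : G.degree u = 1 := (Finset.mem_filter.mp hL').2
        have hau : G.Adj a u := (G.mem_neighborFinset a u).mp (Finset.mem_filter.mp hL').1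
        have hv : v ∈ G.neighborFinset u := (G.mem_neighborFinset u v).mpr hadj
        have haN : a ∈ G.neighborFinset u := (G.mem_neighborFinset u a).mpr hau.symm
        have : 1 < (G.neighborFinset u).card :=
          Finset.one_lt_card.mpr ⟨v, hv, a, haN, fun h => hna.2 h.symm⟩
        rw [G.card_neighborFinset_eq_degree, h1] at this
        omega
      have hdv : G.degree v = 2 := by
        refine hdeg2 v (fun h => hna.2 h.symm) (fun hL' => ?_)
        have h1 : G.degree v = 1 := (Finset.mem_filter.mp hL').2
        have hav : G.Adj a v := (G.mem_neighborFinset a v).mp (Finset.mem_filter.mp hL').1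
        have hu : u ∈ G.neighborFinset v := (G.mem_neighborFinset v u).mpr hadj.symm
        have haN : a ∈ G.neighborFinset v := (G.mem_neighborFinset v a).mpr hav.symm
        have : 1 < (G.neighborFinset v).card :=
          Finset.one_lt_card.mpr ⟨u, hu, a, haN, fun h => hna.1 h.symm⟩
        rw [G.card_neighborFinset_eq_degree, h1] at this
        omega
      simp only [fE, Sym2.lift_mk]
      rw [hdu, hdv]; push_cast; ring
    rw [Finset.sum_congr rfl hconst, Finset.sum_const, hcards, nsmul_eq_mul]
  refine ⟨hnΔ, ?_⟩
  rw [hmain, hsum_a, hsum_rest]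

lemma GRM_case2 (l : ℝ) (n Δ : ℕ) (hΔ : 3 ≤ Δ) (hcard : Fintype.card V = n)
    (hedge : G.edgeFinset.card = n) (a b : V) (ha : G.degree a = Δ)
    (hb : G.degree b = 3) (hab : a ≠ b) (hnadj : ¬ G.Adj a b)
    (hleaves : ((G.neighborFinset a).filter (fun v => G.degree v = 1)).card = Δ - 1)
    (hother : ∀ c, c ≠ a → c ≠ b → G.degree c ≤ 2) :
    Δ + 3 ≤ n ∧ ∑ e ∈ G.edgeFinset, fE G l e
      = ((Δ - 1 : ℕ) : ℝ) * ((Δ : ℝ) + l) * (1 + l) + ((Δ : ℝ) + l) * (2 + l)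
        + 3 * ((3 : ℝ) + l) * (2 + l) + ((n - Δ - 3 : ℕ) : ℝ) * (2 + l) ^ 2 := by
  set L := (G.neighborFinset a).filter (fun v => G.degree v = 1) with hLdef
  have haL : a ∉ L := by simp [hLdef]
  have hbL : b ∉ L := by
    intro h
    exact hnadj ((G.mem_neighborFinset a b).mp (Finset.mem_filter.mp h).1)
  have hbmem : b ∉ insert a L := by
    simp only [Finset.mem_insert]
    rintro (h | h)
    · exact hab h.symm
    · exact hbL h
  set s : Finset V := insert b (insert a L) with hsdef
  have hscard : s.card = Δ + 1 := by
    rw [hsdef, Finset.card_insert_of_notMem hbmem, Finset.card_insert_of_notMem haL,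
      hleaves]
    omega
  have hsum_univ : ∑ v : V, G.degree v = 2 * n := by
    rw [G.sum_degrees_eq_twice_card_edges, hedge]
  have hsum_s : ∑ v ∈ s, G.degree v = 3 + Δ + (Δ - 1) := by
    rw [hsdef, Finset.sum_insert hbmem, Finset.sum_insert haL, ha, hb]
    have : ∀ v ∈ L, G.degree v = 1 := fun v hv => (Finset.mem_filter.mp hv).2
    rw [Finset.sum_congr rfl this, Finset.sum_const, smul_eq_mul, hleaves, mul_one]
    omega
  have hnΔ1 : Δ + 1 ≤ n := by
    rw [← hscard, ← hcard, ← Finset.card_univ]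
    exact Finset.card_le_card (Finset.subset_univ s)
  have hsplit : ∑ v ∈ Finset.univ \ s, G.degree v + ∑ v ∈ s, G.degree v = 2 * n := by
    rw [Finset.sum_sdiff (Finset.subset_univ s), hsum_univ]
  have hRcard : (Finset.univ \ s).card = n - (Δ + 1) := by
    rw [Finset.card_sdiff_of_subset (Finset.subset_univ s), Finset.card_univ, hcard, hscard]
  have hR2 : ∀ v ∈ Finset.univ \ s, G.degree v = 2 := by
    apply all_two
    · intro v hv
      rw [Finset.mem_sdiff, hsdef, Finset.mem_insert, Finset.mem_insert] at hv
      push_neg at hv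
      exact hother v hv.2.2.1 hv.2.1
    · rw [hRcard]; omega
  have hdeg2 : ∀ v, v ≠ a → v ≠ b → v ∉ L → G.degree v = 2 := by
    intro v h1 h2 h3
    exact hR2 v (by simp [hsdef, Finset.mem_sdiff, h1, h2, h3])
  -- split edge sum into a-edges, b-edges, rest
  have hmain := (Finset.sum_filter_add_sum_filter_not G.edgeFinset (fun e => a ∈ e)
    (fE G l)).symm
  have hmain2 := (Finset.sum_filter_add_sum_filter_not
    (G.edgeFinset.filter (fun e => ¬ a ∈ e)) (fun e => b ∈ e) (fE G l)).symm
  -- b-edges don't contain a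
  have hEb : (G.edgeFinset.filter (fun e => ¬ a ∈ e)).filter (fun e => b ∈ e)
      = G.edgeFinset.filter (fun e => b ∈ e) := by
    ext e
    simp only [Finset.mem_filter, mem_edgeFinset]
    constructor
    · rintro ⟨⟨he, _⟩, hbe⟩; exact ⟨he, hbe⟩
    · rintro ⟨he, hbe⟩
      refine ⟨⟨he, fun hae => ?_⟩, hbe⟩
      have := (Sym2.mem_and_mem_iff hab).mp ⟨hae, hbe⟩
      rw [this, mem_edgeSet] at he
      exact hnadj he
  -- sum over edges at a
  have hsum_a : ∑ e ∈ G.edgeFinset.filter (fun e => a ∈ e), fE G l e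
      = ((Δ - 1 : ℕ) : ℝ) * ((Δ : ℝ) + l) * (1 + l) + ((Δ : ℝ) + l) * (2 + l) := by
    rw [sum_over_vertex, ha]
    rw [← Finset.sum_filter_add_sum_filter_not (G.neighborFinset a)
      (fun v => G.degree v = 1)]
    have h1 : ∑ w ∈ L, ((Δ : ℝ) + l) * ((G.degree w : ℝ) + l)
        = ((Δ - 1 : ℕ) : ℝ) * ((Δ : ℝ) + l) * (1 + l) := by
      have : ∀ w ∈ L, ((Δ : ℝ) + l) * ((G.degree w : ℝ) + l)
          = ((Δ : ℝ) + l) * (1 + l) := by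
        intro w hw
        rw [(Finset.mem_filter.mp hw).2]; norm_num
      rw [Finset.sum_congr rfl this, Finset.sum_const, hleaves, nsmul_eq_mul]; ring
    have hcard2 : ((G.neighborFinset a).filter (fun v => ¬ G.degree v = 1)).card = 1 := by
      have := Finset.card_filter_add_card_filter_not (s := G.neighborFinset a)
        (p := fun v => G.degree v = 1)
      rw [G.card_neighborFinset_eq_degree, ha] at this
      rw [← hLdef] at this
      omega
    have h2 : ∑ w ∈ (G.neighborFinset a).filter (fun v => ¬ G.degree v = 1),
        ((Δ : ℝ) + l) * ((G.degree w : ℝ) + l) = ((Δ : ℝ) + l) * (2 + l) := by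
      have : ∀ w ∈ (G.neighborFinset a).filter (fun v => ¬ G.degree v = 1),
          ((Δ : ℝ) + l) * ((G.degree w : ℝ) + l) = ((Δ : ℝ) + l) * (2 + l) := by
        intro w hw
        rw [Finset.mem_filter] at hw
        have hwa : w ≠ a := fun h => G.notMem_neighborFinset_self a (h ▸ hw.1)
        have hwb : w ≠ b := by
          rintro rfl
          exact hnadj ((G.mem_neighborFinset a w).mp hw.1)
        have hwL : w ∉ L := fun h => hw.2 (Finset.mem_filter.mp h).2
        rw [hdeg2 w hwa hwb hwL]; norm_num
      rw [Finset.sum_congr rfl this, Finset.sum_const, hcard2, nsmul_eq_mul]; push_cast; ring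
    rw [h1, h2]
  -- sum over edges at b
  have hsum_b : ∑ e ∈ G.edgeFinset.filter (fun e => b ∈ e), fE G l e
      = 3 * ((3 : ℝ) + l) * (2 + l) := by
    rw [sum_over_vertex, hb]
    have hw2 : ∀ w ∈ G.neighborFinset b,
        (((3 : ℕ) : ℝ) + l) * ((G.degree w : ℝ) + l) = (((3 : ℕ) : ℝ) + l) * (2 + l) := by
      intro w hw
      rw [G.mem_neighborFinset] at hw
      have hwb : w ≠ b := hw.ne'
      have hwa : w ≠ a := by rintro rfl; exact hnadj hw.symm
      have hwL : w ∉ L := by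
        intro hL'
        have h1 : G.degree w = 1 := (Finset.mem_filter.mp hL').2
        have hau : G.Adj a w := (G.mem_neighborFinset a w).mp (Finset.mem_filter.mp hL').1
        have : 1 < (G.neighborFinset w).card := Finset.one_lt_card.mpr
          ⟨a, (G.mem_neighborFinset w a).mpr hau.symm,
           b, (G.mem_neighborFinset w b).mpr hw.symm, hab⟩
        rw [G.card_neighborFinset_eq_degree, h1] at this
        omega
      rw [hdeg2 w hwa hwb hwL]; norm_num
    rw [Finset.sum_congr rfl hw2, Finset.sum_const, G.card_neighborFinset_eq_degree, hb,
      nsmul_eq_mul]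
    push_cast; ring
  -- cardinalities
  have hcardA := Finset.card_filter_add_card_filter_not (s := G.edgeFinset)
    (p := fun e => a ∈ e)
  rw [card_filter_mem, ha, hedge] at hcardA
  have hcardB := Finset.card_filter_add_card_filter_not
    (s := G.edgeFinset.filter (fun e => ¬ a ∈ e)) (p := fun e => b ∈ e)
  rw [hEb, card_filter_mem, hb] at hcardB
  have hnΔ3 : Δ + 3 ≤ n := by omega
  have hcards : ((G.edgeFinset.filter (fun e => ¬ a ∈ e)).filter (fun e => ¬ b ∈ e)).card
      = n - Δ - 3 := by omega
  -- rest edges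
  have hsum_rest : ∑ e ∈ (G.edgeFinset.filter (fun e => ¬ a ∈ e)).filter
      (fun e => ¬ b ∈ e), fE G l e = ((n - Δ - 3 : ℕ) : ℝ) * (2 + l) ^ 2 := by
    have hconst : ∀ e ∈ (G.edgeFinset.filter (fun e => ¬ a ∈ e)).filter
        (fun e => ¬ b ∈ e), fE G l e = (2 + l) ^ 2 := by
      refine Sym2.ind ?_
      intro u v he
      rw [Finset.mem_filter, Finset.mem_filter, mem_edgeFinset, mem_edgeSet] at he
      obtain ⟨⟨hadj, hna⟩, hnb⟩ := he
      rw [Sym2.mem_iff] at hna hnb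
      push_neg at hna hnb
      have key : ∀ w z : V, G.Adj w z → a ≠ w → a ≠ z → b ≠ w → G.degree w = 2 := by
        intro w z hwz h1 h2 h3
        refine hdeg2 w (Ne.symm h1) (Ne.symm h3) (fun hL' => ?_)
        have hd1 : G.degree w = 1 := (Finset.mem_filter.mp hL').2
        have hau : G.Adj a w := (G.mem_neighborFinset a w).mp (Finset.mem_filter.mp hL').1
        have : 1 < (G.neighborFinset w).card := Finset.one_lt_card.mpr
          ⟨z, (G.mem_neighborFinset w z).mpr hwz,
           a, (G.mem_neighborFinset w a).mpr hau.symm, fun h => h2 h.symm⟩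
        rw [G.card_neighborFinset_eq_degree, hd1] at this
        omega
      have hdu : G.degree u = 2 := key u v hadj hna.1 hna.2 hnb.1
      have hdv : G.degree v = 2 := key v u hadj.symm hna.2 hna.1 hnb.2
      simp only [fE, Sym2.lift_mk]
      rw [hdu, hdv]; push_cast; ring
    rw [Finset.sum_congr rfl hconst, Finset.sum_const, hcards, nsmul_eq_mul]
  refine ⟨hnΔ3, ?_⟩
  rw [hmain, hmain2, hEb, hsum_a, hsum_b, hsum_rest]
  ring

end Helpers

set_option maxHeartbeats 1000000 in
theorem stmt17 {V₂ V₃ : Type*} [Fintype V₂] [Fintype V₃]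
    (l : ℝ) (n Δ : ℕ) (hΔ3 : 3 ≤ Δ) (hn : 0 < n)
    (U₂ : SimpleGraph V₂) (hU₂ : IsUnicyclic U₂)
    (hcard₂ : Fintype.card V₂ = n) (hmax₂ : maxDeg U₂ = Δ)
    (a : V₂) (ha : deg U₂ a = Δ) (hacyc : ¬ OnCycle U₂ a)
    (hleaves₂ : {v : V₂ | U₂.Adj a v ∧ deg U₂ v = 1}.ncard = Δ - 1)
    (b : V₂) (hbcyc : OnCycle U₂ b)
    (hmin : ∀ c : V₂, OnCycle U₂ c → U₂.dist a b ≤ U₂.dist a c)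
    (hdist : 2 ≤ U₂.dist a b) (hdegb : deg U₂ b = 3)
    (hother₂ : ∀ c : V₂, c ≠ a → c ≠ b → deg U₂ c ≤ 2)
    (U₃ : SimpleGraph V₃) (hU₃ : IsUnicyclic U₃)
    (hcard₃ : Fintype.card V₃ = n) (hmax₃ : maxDeg U₃ = Δ)
    (a' : V₃) (ha' : deg U₃ a' = Δ) (hacyc' : OnCycle U₃ a')
    (hleaves₃ : {v : V₃ | U₃.Adj a' v ∧ deg U₃ v = 1}.ncard = Δ - 2)
    (hother₃ : ∀ c : V₃, c ≠ a' → deg U₃ c ≤ 2) :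
    GRM l U₃ - GRM l U₂ = (Δ : ℝ) - 2 * l - 6 ∧
      (2 * l + 6 < (Δ : ℝ) → GRM l U₂ < GRM l U₃) ∧
      ((Δ : ℝ) < 2 * l + 6 → GRM l U₃ < GRM l U₂) ∧
      ((Δ : ℝ) = 2 * l + 6 → GRM l U₃ = GRM l U₂) := by
  letI : DecidableEq V₂ := Classical.decEq V₂
  letI : DecidableRel U₂.Adj := Classical.decRel _
  letI : DecidableEq V₃ := Classical.decEq V₃
  letI : DecidableRel U₃.Adj := Classical.decRel _
  have hG2 : GRM l U₂ = ∑ e ∈ U₂.edgeFinset, fE U₂ l e := rfl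
  have hG3 : GRM l U₃ = ∑ e ∈ U₃.edgeFinset, fE U₃ l e := rfl
  have ha2 : U₂.degree a = Δ := ha
  have hb2 : U₂.degree b = 3 := hdegb
  have ha3 : U₃.degree a' = Δ := ha'
  have hoth2 : ∀ c : V₂, c ≠ a → c ≠ b → U₂.degree c ≤ 2 := hother₂
  have hoth3 : ∀ c : V₃, c ≠ a' → U₃.degree c ≤ 2 := hother₃
  have hab : a ≠ b := by
    rintro rfl
    rw [U₂.dist_self] at hdist
    omega
  have hnadj : ¬ U₂.Adj a b := by
    intro h
    have h1 : U₂.dist a b = 1 := SimpleGraph.dist_eq_one_iff_adj.mpr h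
    omega
  have hlv2 : ((U₂.neighborFinset a).filter (fun v => U₂.degree v = 1)).card = Δ - 1 := by
    have h0 : {v : V₂ | U₂.Adj a v ∧ U₂.degree v = 1}
        = ↑((U₂.neighborFinset a).filter (fun v => U₂.degree v = 1)) := by
      ext v
      simp [Finset.mem_coe, Finset.mem_filter, SimpleGraph.mem_neighborFinset]
    have h1 : ({v : V₂ | U₂.Adj a v ∧ U₂.degree v = 1}).ncard = Δ - 1 := hleaves₂
    rwa [h0, Set.ncard_coe_finset] at h1
  have hlv3 : ((U₃.neighborFinset a').filter (fun v => U₃.degree v = 1)).card = Δ - 2 := by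
    have h0 : {v : V₃ | U₃.Adj a' v ∧ U₃.degree v = 1}
        = ↑((U₃.neighborFinset a').filter (fun v => U₃.degree v = 1)) := by
      ext v
      simp [Finset.mem_coe, Finset.mem_filter, SimpleGraph.mem_neighborFinset]
    have h1 : ({v : V₃ | U₃.Adj a' v ∧ U₃.degree v = 1}).ncard = Δ - 2 := hleaves₃
    rwa [h0, Set.ncard_coe_finset] at h1
  have hedge2 : U₂.edgeFinset.card = n := by
    rw [← hcard₂, ← hU₂.2, Set.ncard_eq_toFinset_card']
    congr 1
  have hedge3 : U₃.edgeFinset.card = n := by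
    rw [← hcard₃, ← hU₃.2, Set.ncard_eq_toFinset_card']
    congr 1
  obtain ⟨hn2, hval2⟩ := GRM_case2 U₂ l n Δ hΔ3 hcard₂ hedge2 a b ha2 hb2 hab hnadj hlv2 hoth2
  obtain ⟨hn3, hval3⟩ := GRM_case3 U₃ l n Δ hΔ3 hcard₃ hedge3 a' ha3 hlv3 hoth3
  have c1 : ((Δ - 1 : ℕ) : ℝ) = (Δ : ℝ) - 1 := by
    rw [Nat.cast_sub (by omega)]; norm_num
  have c2 : ((Δ - 2 : ℕ) : ℝ) = (Δ : ℝ) - 2 := by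
    rw [Nat.cast_sub (by omega)]; norm_num
  have c3 : ((n - Δ : ℕ) : ℝ) = (n : ℝ) - Δ := by
    rw [Nat.cast_sub (by omega)]
  have c4 : ((n - Δ - 3 : ℕ) : ℝ) = (n : ℝ) - Δ - 3 := by
    rw [Nat.cast_sub (show 3 ≤ n - Δ by omega), Nat.cast_sub (show Δ ≤ n by omega)]
    norm_num
  have hdiff : GRM l U₃ - GRM l U₂ = (Δ : ℝ) - 2 * l - 6 := by
    rw [hG3, hG2, hval3, hval2, c1, c2, c3, c4]
    ring
  exact ⟨hdiff, fun h => by linarith, fun h => by linarith, fun h => by linarith⟩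
end

section
/- Let λ ≥ -1/2 be a real number and let Γ be a connected simple graph with n ≥ 3 vertices and maximum degree Δ. If Δ < n-1 then GRM_λ(Γ) ≥ n(2+λ)² − 3(2+λ) + (1+λ)(Δ² − 3Δ − λ), and if Δ = n-1 then GRM_λ(Γ) ≥ Δ(Δ+λ)(1+λ). -/
open SimpleGraph

open Finset

set_option linter.unusedSectionVars false
set_option maxHeartbeats 1000000

section Aux
variable {V : Type*} [Fintype V] [DecidableEq V] (G : SimpleGraph V) [DecidableRel G.Adj]

lemma sum_dart_eq_twice (f : V → V → ℝ) (hf : ∀ a b, f a b = f b a) :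
    ∑ d : G.Dart, f d.fst d.snd = 2 * ∑ e ∈ G.edgeFinset, Sym2.lift ⟨f, hf⟩ e := by
  have h1 : ∀ d : G.Dart, f d.fst d.snd = Sym2.lift ⟨f, hf⟩ d.edge := fun d => rfl
  calc ∑ d : G.Dart, f d.fst d.snd = ∑ d : G.Dart, Sym2.lift ⟨f, hf⟩ d.edge :=
        Finset.sum_congr rfl fun d _ => h1 d
    _ = ∑ e ∈ G.edgeFinset, ∑ d ∈ Finset.univ.filter (fun d : G.Dart => d.edge = e),
          Sym2.lift ⟨f, hf⟩ d.edge :=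
        (Finset.sum_fiberwise_of_maps_to (fun d _ => by simp) _).symm
    _ = ∑ e ∈ G.edgeFinset, 2 * Sym2.lift ⟨f, hf⟩ e := by
        refine Finset.sum_congr rfl fun e he => ?_
        rw [Finset.sum_congr rfl (fun d hd => by rw [(Finset.mem_filter.1 hd).2])]
        rw [Finset.sum_const, G.dart_edge_fiber_card e (by rwa [← mem_edgeFinset]),
          nsmul_eq_mul]
        norm_num
    _ = 2 * ∑ e ∈ G.edgeFinset, Sym2.lift ⟨f, hf⟩ e := by rw [Finset.mul_sum]

lemma sum_dart_eq_nbhd (f : V → V → ℝ) :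
    ∑ d : G.Dart, f d.fst d.snd = ∑ v, ∑ u ∈ G.neighborFinset v, f v u := by
  rw [← Finset.sum_fiberwise_of_maps_to (g := fun d : G.Dart => d.fst)
    (t := (Finset.univ : Finset V)) (fun d _ => Finset.mem_univ _)]
  refine Finset.sum_congr rfl fun v _ => ?_
  have : (Finset.univ.filter fun d : G.Dart => d.fst = v)
      = Finset.univ.image (G.dartOfNeighborSet v) := G.dart_fst_fiber v
  rw [this, Finset.sum_image (fun a _ b _ h => G.dartOfNeighborSet_injective v h)]
  rw [Finset.sum_subtype (G.neighborFinset v)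
    (fun u => G.mem_neighborFinset v u) (fun u => f v u)]
  rfl

lemma sum_dart_swap (f : V → V → ℝ) :
    ∑ d : G.Dart, f d.fst d.snd = ∑ d : G.Dart, f d.snd d.fst :=
  Fintype.sum_equiv (Function.Involutive.toPerm _ Dart.symm_involutive) _ _
    (fun _ => rfl)

lemma nbhd_swap (f : V → V → ℝ) :
    ∑ v, ∑ u ∈ G.neighborFinset v, f v u = ∑ v, ∑ u ∈ G.neighborFinset v, f u v := by
  rw [← sum_dart_eq_nbhd, ← sum_dart_eq_nbhd, sum_dart_swap]

lemma walk_closure {S : Finset V} (hS : ∀ s ∈ S, ∀ u, G.Adj s u → u ∈ S) :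
    ∀ {a b : V} (_w : G.Walk a b), a ∈ S → b ∈ S := by
  intro a b w
  induction w with
  | nil => exact id
  | cons h p ih => exact fun ha => ih (hS _ ha _ h)

lemma deg_pos (hconn : G.Connected) (hcard : 2 ≤ Fintype.card V) (v : V) :
    1 ≤ G.degree v := by
  have : Nontrivial V := Fintype.one_lt_card_iff_nontrivial.1 hcard
  obtain ⟨w, hw⟩ := exists_ne v
  obtain ⟨p⟩ := hconn v w
  cases p with
  | nil => exact absurd rfl hw.symm
  | cons h _ => exact (G.degree_pos_iff_exists_adj v).2 ⟨_, h⟩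

lemma nbr_singleton {x y : V} (hxy : G.Adj x y) (hx : G.degree x = 1) :
    G.neighborFinset x = {y} := by
  have hcard : (G.neighborFinset x).card = 1 := by
    rw [G.card_neighborFinset_eq_degree]; exact hx
  obtain ⟨a, ha⟩ := Finset.card_eq_one.1 hcard
  have hy : y ∈ G.neighborFinset x := (G.mem_neighborFinset x y).2 hxy
  rw [ha] at hy ⊢
  rw [Finset.mem_singleton] at hy
  rw [hy]

/-- No two adjacent leaves in a connected graph on ≥ 3 vertices. -/
lemma leaf_nbr (hconn : G.Connected) (hn : 3 ≤ Fintype.card V)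
    {x y : V} (hxy : G.Adj x y) (hx : G.degree x = 1) : 2 ≤ G.degree y := by
  by_contra h
  have hy : G.degree y = 1 := by
    have := deg_pos G hconn (by omega) y
    omega
  have hNx := nbr_singleton G hxy hx
  have hNy := nbr_singleton G hxy.symm hy
  have hcl : ∀ u : V, u ∈ ({x, y} : Finset V) := by
    intro u
    obtain ⟨w⟩ := hconn x u
    refine walk_closure G ?_ w (Finset.mem_insert_self _ _)
    intro s hs u' hadj
    have hu' : u' ∈ G.neighborFinset s := (G.mem_neighborFinset s u').2 hadj
    rcases Finset.mem_insert.1 hs with rfl | hs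
    · rw [hNx, Finset.mem_singleton] at hu'
      simp [hu']
    · rw [Finset.mem_singleton] at hs
      subst hs
      rw [hNy, Finset.mem_singleton] at hu'
      simp [hu']
  have hsub : (Finset.univ : Finset V) ⊆ {x, y} := fun u _ => hcl u
  have := Finset.card_le_card hsub
  simp only [Finset.card_univ] at this
  have h2 : ({x, y} : Finset V).card ≤ 2 := Finset.card_insert_le _ _ |>.trans (by simp)
  omega

/-- Every vertex has a neighbor of degree ≥ 2, provided Δ ≤ n-2. -/
lemma internal_nbr (hconn : G.Connected) (hΔ : G.maxDegree + 2 ≤ Fintype.card V)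
    (v : V) : ∃ u ∈ G.neighborFinset v, 2 ≤ G.degree u := by
  by_contra h
  push_neg at h
  have hleaf : ∀ u ∈ G.neighborFinset v, G.degree u = 1 := by
    intro u hu
    have h1 := deg_pos G hconn (by omega) u
    have := h u hu
    omega
  have hcl : ∀ u : V, u ∈ insert v (G.neighborFinset v) := by
    intro u
    obtain ⟨w⟩ := hconn v u
    refine walk_closure G ?_ w (Finset.mem_insert_self _ _)
    intro s hs u' hadj
    have hu' : u' ∈ G.neighborFinset s := (G.mem_neighborFinset s u').2 hadj
    rcases Finset.mem_insert.1 hs with rfl | hs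
    · exact Finset.mem_insert_of_mem hu'
    · have hsv : G.Adj s v := ((G.mem_neighborFinset v s).1 hs).symm
      rw [nbr_singleton G hsv (hleaf s hs), Finset.mem_singleton] at hu'
      rw [hu']
      exact Finset.mem_insert_self _ _
  have hsub : (Finset.univ : Finset V) ⊆ insert v (G.neighborFinset v) := fun u _ => hcl u
  have h1 := Finset.card_le_card hsub
  have h2 : (insert v (G.neighborFinset v)).card ≤ G.degree v + 1 := by
    refine (Finset.card_insert_le _ _).trans ?_
    rw [G.card_neighborFinset_eq_degree]
  have h3 := G.degree_le_maxDegree v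
  simp only [Finset.card_univ] at h1
  omega

/-- A connected graph has at least n - 1 edges. -/
lemma edge_lower (hconn : G.Connected) :
    Fintype.card V ≤ G.edgeFinset.card + 1 := by
  obtain ⟨r⟩ := hconn.nonempty
  have key : ∀ u : V, u ≠ r → ∃ x : V, G.Adj u x ∧ G.dist x r + 1 = G.dist u r := by
    intro u hu
    have hd0 : G.dist u r ≠ 0 :=
      (SimpleGraph.dist_ne_zero_iff_ne_and_reachable).2 ⟨hu, hconn u r⟩
    obtain ⟨w, hw⟩ := (hconn u r).exists_walk_length_eq_dist
    cases w with
    | nil => exact absurd rfl hu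
    | @cons _ x _ h p =>
      refine ⟨x, h, ?_⟩
      have h1 : G.dist x r ≤ p.length := SimpleGraph.dist_le p
      have h2 : p.length + 1 = G.dist u r := by
        simpa [SimpleGraph.Walk.length_cons] using hw
      obtain ⟨q, hq⟩ := (hconn x r).exists_walk_length_eq_dist
      have h3 : G.dist u r ≤ G.dist x r + 1 := by
        have := SimpleGraph.dist_le (SimpleGraph.Walk.cons h q)
        rw [SimpleGraph.Walk.length_cons, hq] at this
        omega
      omega
  choose nxt hadj hdist using key
  have hinj : Set.InjOn (fun u : V => if hu : u = r then (s(u, u)) else s(u, nxt u hu))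
      ↑(Finset.univ.erase r) := by
    intro a ha b hb hab
    have ha' : a ≠ r := Finset.ne_of_mem_erase (by exact_mod_cast ha)
    have hb' : b ≠ r := Finset.ne_of_mem_erase (by exact_mod_cast hb)
    simp only [dif_neg ha', dif_neg hb', Sym2.eq_iff] at hab
    rcases hab with ⟨h1, _⟩ | ⟨h1, h2⟩
    · exact h1
    · exfalso
      have d1 := hdist a ha'
      have d2 := hdist b hb'
      rw [← h1] at d2
      rw [h2] at d1
      omega
  have hmaps : ∀ u ∈ Finset.univ.erase r,
      (if hu : u = r then (s(u, u)) else s(u, nxt u hu)) ∈ G.edgeFinset := by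
    intro u hu
    have hu' : u ≠ r := Finset.ne_of_mem_erase hu
    rw [dif_neg hu', mem_edgeFinset, SimpleGraph.mem_edgeSet]
    exact hadj u hu'
  have := Finset.card_le_card_of_injOn _ hmaps hinj
  rw [Finset.card_erase_of_mem (Finset.mem_univ r), Finset.card_univ] at this
  omega

end Aux

theorem stmt18 {V : Type*} [Fintype V] (l : ℝ) (hl : -1/2 ≤ l)
    (n Δ : ℕ) (hn : 3 ≤ n) (G : SimpleGraph V) (hconn : G.Connected)
    (hcard : Fintype.card V = n) (hmax : maxDeg G = Δ) :
    (Δ < n - 1 →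
      GRM l G ≥ (n : ℝ) * (2 + l) ^ 2 - 3 * (2 + l)
        + (1 + l) * ((Δ : ℝ) ^ 2 - 3 * (Δ : ℝ) - l)) ∧
    (Δ = n - 1 →
      GRM l G ≥ (Δ : ℝ) * ((Δ : ℝ) + l) * (1 + l)) := by
  letI : DecidableEq V := Classical.decEq V
  letI : DecidableRel G.Adj := Classical.decRel _
  have hmaxG : G.maxDegree = Δ := hmax
  have hn3 : 3 ≤ Fintype.card V := by omega
  have hNE : Nonempty V := Fintype.card_pos_iff.1 (by omega)
  obtain ⟨v₀, hv₀⟩ := G.exists_maximal_degree_vertex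
  have hdegv₀ : G.degree v₀ = Δ := by rw [← hv₀, hmaxG]
  set D : V → ℝ := fun v => (G.degree v : ℝ) with hDdef
  have hsym : ∀ a b : V, (D a + l) * (D b + l) = (D b + l) * (D a + l) := fun a b => by ring
  have hGRMdef : GRM l G = ∑ e ∈ G.edgeFinset,
      Sym2.lift ⟨fun a b => (D a + l) * (D b + l), hsym⟩ e := rfl
  have hdart : ∑ d : G.Dart, (D d.fst + l) * (D d.snd + l) = 2 * GRM l G := by
    rw [hGRMdef]
    exact sum_dart_eq_twice G _ hsym
  have hA0 : ∑ d : G.Dart, (D d.fst + l) * (D d.snd + l)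
      = ∑ v, ∑ u ∈ G.neighborFinset v, (D v + l) * (D u + l) :=
    sum_dart_eq_nbhd G (fun a b => (D a + l) * (D b + l))
  set P : ℝ := ∑ v, D v with hPdef
  set Q : ℝ := ∑ v, (D v) ^ 2 with hQdef
  set T : ℝ := ∑ v, ∑ u ∈ G.neighborFinset v, (D v - 2) * (D u - 2) with hTdef
  -- basic sums
  have hQ1 : ∑ v, ∑ u ∈ G.neighborFinset v, D v = Q := by
    refine Finset.sum_congr rfl fun v _ => ?_
    rw [Finset.sum_const, G.card_neighborFinset_eq_degree, nsmul_eq_mul, sq]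
  have hQ2 : ∑ v, ∑ u ∈ G.neighborFinset v, D u = Q := by
    rw [nbhd_swap G (fun a b => D b)]
    exact hQ1
  have hP1 : ∑ v, ∑ u ∈ G.neighborFinset v, (1 : ℝ) = P := by
    refine Finset.sum_congr rfl fun v _ => ?_
    rw [Finset.sum_const, G.card_neighborFinset_eq_degree, nsmul_eq_mul, mul_one]
  have hA : 2 * GRM l G = T + (2 + l) * Q + (2 + l) * Q + (l ^ 2 - 4) * P := by
    rw [← hdart, hA0]
    have expand : ∀ v : V, ∑ u ∈ G.neighborFinset v, (D v + l) * (D u + l)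
        = (∑ u ∈ G.neighborFinset v, (D v - 2) * (D u - 2))
          + ((2 + l) * (∑ u ∈ G.neighborFinset v, D v)
          + ((2 + l) * (∑ u ∈ G.neighborFinset v, D u)
          + (l ^ 2 - 4) * (∑ u ∈ G.neighborFinset v, (1 : ℝ)))) := by
      intro v
      rw [Finset.mul_sum, Finset.mul_sum, Finset.mul_sum,
        ← Finset.sum_add_distrib, ← Finset.sum_add_distrib, ← Finset.sum_add_distrib]
      exact Finset.sum_congr rfl fun u _ => by ring
    rw [Finset.sum_congr rfl fun v _ => expand v]
    rw [Finset.sum_add_distrib, Finset.sum_add_distrib, Finset.sum_add_distrib,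
      ← Finset.mul_sum, ← Finset.mul_sum, ← Finset.mul_sum, hQ1, hQ2, hP1, ← hTdef]
    ring
  have hdegpos : ∀ v : V, 1 ≤ G.degree v := fun v => deg_pos G hconn (by omega) v
  have hD1 : ∀ v : V, (1 : ℝ) ≤ D v := fun v => by
    have := hdegpos v
    simp only [hDdef]
    exact_mod_cast this
  -- sum of (D v - 1)(D v - 2)
  have hsum3 : ∑ v, (D v - 1) * (D v - 2) = Q - 3 * P + 2 * (n : ℝ) := by
    have : ∀ v : V, (D v - 1) * (D v - 2) = D v ^ 2 - 3 * D v + 2 := fun v => by ring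
    rw [Finset.sum_congr rfl fun v _ => this v]
    rw [Finset.sum_add_distrib, Finset.sum_sub_distrib, ← Finset.mul_sum,
      Finset.sum_const, Finset.card_univ, hcard, nsmul_eq_mul]
    ring
  -- P = 2 * #edges and P ≥ 2(n-1)
  have hPedges : P = 2 * (G.edgeFinset.card : ℝ) := by
    have h := G.sum_degrees_eq_twice_card_edges
    rw [hPdef]
    have : ∑ v, D v = ((∑ v, G.degree v : ℕ) : ℝ) := by
      rw [Nat.cast_sum]
    rw [this, h]
    push_cast
    ring
  have hPlow : 2 * ((n : ℝ) - 1) ≤ P := by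
    have h := edge_lower G hconn
    rw [hcard] at h
    rw [hPedges]
    have : (n : ℝ) ≤ (G.edgeFinset.card : ℝ) + 1 := by exact_mod_cast h
    linarith
  -- Q lower bound
  have hQlow : (Δ : ℝ) ^ 2 + 3 * (P - (Δ : ℝ)) - 2 * ((n : ℝ) - 1) ≤ Q := by
    have hsplitQ : ∑ v ∈ Finset.univ.erase v₀, (D v) ^ 2 + D v₀ ^ 2 = Q :=
      Finset.sum_erase_add _ _ (Finset.mem_univ v₀)
    have hsplitP : ∑ v ∈ Finset.univ.erase v₀, D v + D v₀ = P :=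
      Finset.sum_erase_add _ _ (Finset.mem_univ v₀)
    have hDv₀ : D v₀ = (Δ : ℝ) := by
      simp only [hDdef]; exact_mod_cast congrArg Nat.cast hdegv₀
    have hterm : ∀ v ∈ Finset.univ.erase v₀, 3 * D v - 2 ≤ (D v) ^ 2 := by
      intro v _
      rcases Nat.lt_or_ge (G.degree v) 2 with h2 | h2
      · have h1 : G.degree v = 1 := by have := hdegpos v; omega
        have : D v = 1 := by simp only [hDdef, h1]; norm_num
        rw [this]; norm_num
      · have : (2 : ℝ) ≤ D v := by simp only [hDdef]; exact_mod_cast h2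
        nlinarith
    have hsumlow := Finset.sum_le_sum hterm
    have hcount : ∑ v ∈ Finset.univ.erase v₀, (3 * D v - 2)
        = 3 * (P - (Δ : ℝ)) - 2 * ((n : ℝ) - 1) := by
      rw [Finset.sum_sub_distrib, ← Finset.mul_sum, Finset.sum_const,
        Finset.card_erase_of_mem (Finset.mem_univ v₀), Finset.card_univ, hcard,
        nsmul_eq_mul]
      have h1 : ∑ v ∈ Finset.univ.erase v₀, D v = P - (Δ : ℝ) := by
        rw [← hsplitP, hDv₀]; ring
      rw [h1]
      have : ((n - 1 : ℕ) : ℝ) = (n : ℝ) - 1 := by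
        have : 1 ≤ n := by omega
        push_cast [this]; ring
      rw [this]; ring
    nlinarith [hsplitQ, hDv₀, hsumlow, hcount]
  -- leaf indicator
  set χ : V → ℝ := fun u => if G.degree u = 1 then (1 : ℝ) else 0 with hχdef
  constructor
  · -- Case Δ ≤ n - 2
    intro hΔ
    have hΔn : G.maxDegree + 2 ≤ Fintype.card V := by omega
    -- T lower bound
    have hpair : ∀ v : V, ∀ u ∈ G.neighborFinset v,
        -(χ u * (D v - 2)) - χ v * (D u - 2) ≤ (D v - 2) * (D u - 2) := by
      intro v u hu
      have hadj : G.Adj v u := (G.mem_neighborFinset v u).1 hu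
      by_cases hv1 : G.degree v = 1
      · by_cases hu1 : G.degree u = 1
        · exfalso
          have := leaf_nbr G hconn hn3 hadj hv1
          omega
        · have hDv : D v = 1 := by simp only [hDdef, hv1]; norm_num
          simp only [hχdef, if_pos hv1, if_neg hu1, hDv]
          ring_nf
          nlinarith []
      · by_cases hu1 : G.degree u = 1
        · have hDu : D u = 1 := by simp only [hDdef, hu1]; norm_num
          simp only [hχdef, if_pos hu1, if_neg hv1, hDu]
          nlinarith []
        · simp only [hχdef, if_neg hu1, if_neg hv1]
          have hv2 : (2 : ℝ) ≤ D v := by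
            have := hdegpos v
            have h2 : 2 ≤ G.degree v := by omega
            simp only [hDdef]; exact_mod_cast h2
          have hu2 : (2 : ℝ) ≤ D u := by
            have := hdegpos u
            have h2 : 2 ≤ G.degree u := by omega
            simp only [hDdef]; exact_mod_cast h2
          nlinarith
    have hT1 : ∑ v, ∑ u ∈ G.neighborFinset v,
        (-(χ u * (D v - 2)) - χ v * (D u - 2)) ≤ T := by
      rw [hTdef]
      exact Finset.sum_le_sum fun v _ => Finset.sum_le_sum fun u hu => hpair v u hu
    have hT2 : ∑ v, ∑ u ∈ G.neighborFinset v, (-(χ u * (D v - 2)) - χ v * (D u - 2))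
        = -(∑ v, ∑ u ∈ G.neighborFinset v, χ u * (D v - 2))
          - ∑ v, ∑ u ∈ G.neighborFinset v, χ v * (D u - 2) := by
      have hper : ∀ v : V, ∑ u ∈ G.neighborFinset v, (-(χ u * (D v - 2)) - χ v * (D u - 2))
          = -(∑ u ∈ G.neighborFinset v, χ u * (D v - 2))
            - ∑ u ∈ G.neighborFinset v, χ v * (D u - 2) := by
        intro v
        rw [Finset.sum_sub_distrib, Finset.sum_neg_distrib]
      rw [Finset.sum_congr rfl fun v _ => hper v, Finset.sum_sub_distrib,
        Finset.sum_neg_distrib]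
    have hT3 : ∑ v, ∑ u ∈ G.neighborFinset v, χ v * (D u - 2)
        = ∑ v, ∑ u ∈ G.neighborFinset v, χ u * (D v - 2) := by
      exact nbhd_swap G (fun a b => χ a * (D b - 2))
    have hT4 : ∑ v, ∑ u ∈ G.neighborFinset v, χ u * (D v - 2)
        ≤ ∑ v, (D v - 1) * (D v - 2) := by
      refine Finset.sum_le_sum fun v _ => ?_
      rcases Nat.lt_or_ge (G.degree v) 2 with h2 | h2
      · have hv1 : G.degree v = 1 := by have := hdegpos v; omega
        have hz : ∀ u ∈ G.neighborFinset v, χ u * (D v - 2) = 0 := by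
          intro u hu
          have hadj : G.Adj v u := (G.mem_neighborFinset v u).1 hu
          have := leaf_nbr G hconn hn3 hadj hv1
          have hu1 : G.degree u ≠ 1 := by omega
          simp [hχdef, hu1]
        rw [Finset.sum_eq_zero hz]
        have hDv : D v = 1 := by simp only [hDdef, hv1]; norm_num
        rw [hDv]; norm_num
      · obtain ⟨u₀, hu₀mem, hu₀⟩ := internal_nbr G hconn hΔn v
        have hℓ : ∑ u ∈ G.neighborFinset v, χ u ≤ D v - 1 := by
          rw [← Finset.sum_erase_add _ _ hu₀mem]
          have hχu₀ : χ u₀ = 0 := by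
            have : G.degree u₀ ≠ 1 := by omega
            simp [hχdef, this]
          rw [hχu₀, add_zero]
          have hbound : ∑ u ∈ (G.neighborFinset v).erase u₀, χ u
              ≤ (((G.neighborFinset v).erase u₀).card : ℝ) := by
            have : ∀ u ∈ (G.neighborFinset v).erase u₀, χ u ≤ 1 := by
              intro u _
              simp only [hχdef]
              split <;> norm_num
            calc ∑ u ∈ (G.neighborFinset v).erase u₀, χ u
                ≤ ∑ u ∈ (G.neighborFinset v).erase u₀, (1 : ℝ) :=
                  Finset.sum_le_sum this
              _ = (((G.neighborFinset v).erase u₀).card : ℝ) := by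
                  rw [Finset.sum_const, nsmul_eq_mul, mul_one]
          refine hbound.trans ?_
          rw [Finset.card_erase_of_mem hu₀mem, G.card_neighborFinset_eq_degree]
          have : ((G.degree v - 1 : ℕ) : ℝ) = D v - 1 := by
            have h1 : 1 ≤ G.degree v := hdegpos v
            simp only [hDdef]
            push_cast [h1]
            ring
          rw [this]
        have hχnn : 0 ≤ ∑ u ∈ G.neighborFinset v, χ u := by
          refine Finset.sum_nonneg fun u _ => ?_
          simp only [hχdef]
          split <;> norm_num
        have hDv2 : (2 : ℝ) ≤ D v := by simp only [hDdef]; exact_mod_cast h2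
        calc ∑ u ∈ G.neighborFinset v, χ u * (D v - 2)
            = (∑ u ∈ G.neighborFinset v, χ u) * (D v - 2) := by
              rw [Finset.sum_mul]
          _ ≤ (D v - 1) * (D v - 2) := by
              apply mul_le_mul_of_nonneg_right hℓ
              linarith
    have hT : -(2 * (Q - 3 * P + 2 * (n : ℝ))) ≤ T := by
      rw [hT2, hT3] at hT1
      rw [← hsum3]
      linarith [hT4, hT1]
    -- final assembly
    have h1l : (0 : ℝ) < 1 + l := by linarith
    have e1 : 0 ≤ (1 + l) * (Q - ((Δ : ℝ) ^ 2 + 3 * (P - (Δ : ℝ)) - 2 * ((n : ℝ) - 1))) :=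
      mul_nonneg h1l.le (by linarith)
    have e2 : 0 ≤ (l ^ 2 + 6 * l + 8) * (P - 2 * ((n : ℝ) - 1)) :=
      mul_nonneg (by nlinarith) (by linarith)
    rw [ge_iff_le, ← sub_nonneg]
    nlinarith [hA, hT, e1, e2]
  · -- Case Δ = n - 1
    intro hΔ
    have hΔ2 : 2 ≤ Δ := by omega
    have hΔr : (2 : ℝ) ≤ (Δ : ℝ) := by exact_mod_cast hΔ2
    have hDv₀ : D v₀ = (Δ : ℝ) := by
      simp only [hDdef]; exact_mod_cast congrArg Nat.cast hdegv₀
    have hnonneg : ∀ e ∈ G.edgeFinset,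
        0 ≤ Sym2.lift ⟨fun a b => (D a + l) * (D b + l), hsym⟩ e := by
      intro e he
      induction e with
      | _ x y =>
        simp only [Sym2.lift_mk]
        have hadj : G.Adj x y := by rwa [mem_edgeFinset, SimpleGraph.mem_edgeSet] at he
        have hx : 1 ≤ G.degree x := (G.degree_pos_iff_exists_adj x).2 ⟨y, hadj⟩
        have hy : 1 ≤ G.degree y := (G.degree_pos_iff_exists_adj y).2 ⟨x, hadj.symm⟩
        have hx' : (1 : ℝ) ≤ D x := by simp only [hDdef]; exact_mod_cast hx
        have hy' : (1 : ℝ) ≤ D y := by simp only [hDdef]; exact_mod_cast hy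
        have : (0 : ℝ) ≤ D x + l := by linarith
        have : (0 : ℝ) ≤ D y + l := by linarith
        positivity
    have hsubset : G.incidenceFinset v₀ ⊆ G.edgeFinset := by
      intro e he
      rw [mem_incidenceFinset] at he
      rw [mem_edgeFinset]
      exact he.1
    have hterm : ∀ e ∈ G.incidenceFinset v₀,
        ((Δ : ℝ) + l) * (1 + l) ≤ Sym2.lift ⟨fun a b => (D a + l) * (D b + l), hsym⟩ e := by
      intro e he
      induction e with
      | _ x y =>
        simp only [Sym2.lift_mk]
        rw [mem_incidenceFinset] at he
        obtain ⟨hee, hve⟩ := he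
        rw [SimpleGraph.mem_edgeSet] at hee
        have hx : 1 ≤ G.degree x := (G.degree_pos_iff_exists_adj x).2 ⟨y, hee⟩
        have hy : 1 ≤ G.degree y := (G.degree_pos_iff_exists_adj y).2 ⟨x, hee.symm⟩
        have hx' : (1 : ℝ) ≤ D x := by simp only [hDdef]; exact_mod_cast hx
        have hy' : (1 : ℝ) ≤ D y := by simp only [hDdef]; exact_mod_cast hy
        have hΔl : (0 : ℝ) ≤ (Δ : ℝ) + l := by linarith
        rcases Sym2.mem_iff.1 hve with rfl | rfl
        · rw [hDv₀]
          have h1 : 1 + l ≤ D y + l := by linarith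
          exact mul_le_mul_of_nonneg_left h1 hΔl
        · rw [hDv₀]
          have h1 : 1 + l ≤ D x + l := by linarith
          nlinarith [mul_le_mul_of_nonneg_right h1 hΔl]
    have hcardinc : (G.incidenceFinset v₀).card = Δ := by
      rw [G.card_incidenceFinset_eq_degree, hdegv₀]
    have hsum1 : ∑ e ∈ G.incidenceFinset v₀,
        Sym2.lift ⟨fun a b => (D a + l) * (D b + l), hsym⟩ e
        ≤ ∑ e ∈ G.edgeFinset, Sym2.lift ⟨fun a b => (D a + l) * (D b + l), hsym⟩ e := by
      refine Finset.sum_le_sum_of_subset_of_nonneg hsubset fun e he _ => hnonneg e he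
    have hsum2 : (Δ : ℝ) * (((Δ : ℝ) + l) * (1 + l)) ≤ ∑ e ∈ G.incidenceFinset v₀,
        Sym2.lift ⟨fun a b => (D a + l) * (D b + l), hsym⟩ e := by
      have := Finset.card_nsmul_le_sum (G.incidenceFinset v₀) _ _ hterm
      rw [hcardinc, nsmul_eq_mul] at this
      exact this
    rw [ge_iff_le, hGRMdef]
    calc (Δ : ℝ) * ((Δ : ℝ) + l) * (1 + l) = (Δ : ℝ) * (((Δ : ℝ) + l) * (1 + l)) := by ring
      _ ≤ _ := hsum2.trans hsum1
end
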